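/- arXiv:2601.01421 — 14 statements merged into one kernel-verified Lean document; each statement's English description precedes it below -/
import Mathlib

section
/- Let c be a choice function on a finite nonempty set X. Then for every strict linear order ▷ on X there is a rationalization by self-punishment of c by ▷; concretely, for every menu A one has c(A) = max(A, ▷_i) where i = |{y ∈ X : y ▷ c(A)}|, and 0 ≤ i ≤ |X|−1. -/
variable {X : Type*}

/-- A strict linear order: asymmetric, transitive, complete. -/
def IsSLO (r : X → X → Prop) : Prop :=
  (∀ a b : X, r a b → ¬ r b a) ∧ (∀ a b d : X, r a b → r b d → r a d) ∧
    (∀ a b : X, a ≠ b → r a b ∨ r b a)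

/-- The set of the top `i` elements of `X` with respect to `r`
(those with fewer than `i` elements strictly above them). -/
def topSet (r : X → X → Prop) (i : ℕ) : Set X := {a | Set.ncard {b | r b a} < i}

/-- The `i`-th harmful distortion of `r`: the top `i` elements are moved,
in reverse order, below all the other elements. -/
def harmful (r : X → X → Prop) (i : ℕ) : X → X → Prop := fun a b =>
  (b ∈ topSet r i ∧ (a ∈ topSet r i → r b a)) ∨
    (a ∉ topSet r i ∧ b ∉ topSet r i ∧ r a b)

/-- A choice function selects an element from every nonempty menu. -/
def IsChoice (c : Finset X → X) : Prop := ∀ A : Finset X, A.Nonempty → c A ∈ A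

/-- `x` is the `r`-maximum of the menu `A`. -/
def IsMaxOf (r : X → X → Prop) (A : Finset X) (x : X) : Prop :=
  x ∈ A ∧ ∀ y ∈ A, y ≠ x → r x y

/-- A reversal (violation of WARP) of `c`. -/
def IsReversal [DecidableEq X] (c : Finset X → X) (A B : Finset X) : Prop :=
  A.Nonempty ∧ B.Nonempty ∧ A ≠ B ∧ c A ≠ c B ∧ c A ∈ A ∩ B ∧ c B ∈ A ∩ B

/-- `I` is (the index set of) a rationalization by self-punishment of `c` by `r`. -/
def RSP [Fintype X] (c : Finset X → X) (r : X → X → Prop) (I : Finset ℕ) : Prop :=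
  I.Nonempty ∧ (∀ i ∈ I, i ≤ Fintype.card X - 1) ∧
    ∀ A : Finset X, A.Nonempty → ∃ i ∈ I, IsMaxOf (harmful r i) A (c A)

/-- The degree of self-punishment of `c`: the minimum over all strict linear orders `r`
and all rationalizations by self-punishment of `c` by `r` of the maximal index used. -/
noncomputable def sp [Fintype X] (c : Finset X → X) : ℕ :=
  sInf { m : ℕ | ∃ r : X → X → Prop, IsSLO r ∧ ∃ I : Finset ℕ,
    RSP c r I ∧ m ∈ I ∧ ∀ i ∈ I, i ≤ m }

/-- `c` is inconsistent: every ordered pair of distinct items is selected in some reversal. -/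
def Inconsistent [DecidableEq X] (c : Finset X → X) : Prop :=
  ∀ x y : X, x ≠ y → ∃ A B : Finset X, IsReversal c A B ∧ c A = x ∧ c B = y

/-- The revealed preference `▷^{c,x}`. -/
def cxPref (c : Finset X → X) (x : X) : X → X → Prop := fun y z =>
  (y = x ∧ z ≠ x) ∨
    (y ≠ x ∧ z ≠ x ∧ y ≠ z ∧ ∃ A : Finset X, x ∉ A ∧ z ∈ A ∧ c A = y)

/-- `c` violates WARP under constant nonreciprocal selection of `j` items. -/
def ViolatesCNS [Fintype X] [DecidableEq X] (c : Finset X → X) (j : ℕ) : Prop :=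
  (∀ D : Finset X, D.card < j → ∃ A B : Finset X, IsReversal c A B ∧ c A ∉ D ∧ c B ∉ D) ∧
    ∃ xs : Finset X, xs.card = j ∧
      (∀ A B : Finset X, IsReversal c A B → c A ∈ xs ∨ c B ∈ xs) ∧
      (∀ x ∈ xs, ∃ A B : Finset X, ∃ y : X, IsReversal c A B ∧ y ∉ xs ∧
        ((c A = x ∧ c B = y) ∨ (c A = y ∧ c B = x)))

/-- The relation `▷^c` built from the witnesses `x 1, …, x j`. -/
def witnessPref (c : Finset X → X) (x : ℕ → X) (j : ℕ) : X → X → Prop := fun y z =>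
  (∃ g h : ℕ, 1 ≤ g ∧ g < h ∧ h ≤ j ∧ y = x g ∧ z = x h) ∨
    ((∀ g : ℕ, 1 ≤ g → g ≤ j → y ≠ x g) ∧ (∀ g : ℕ, 1 ≤ g → g ≤ j → z ≠ x g) ∧
      ∃ A : Finset X, z ∈ A ∧ c A = y) ∨
    ((∃ g : ℕ, 1 ≤ g ∧ g ≤ j ∧ y = x g) ∧ (∀ g : ℕ, 1 ≤ g → g ≤ j → z ≠ x g))

theorem stmt1 [Fintype X] [Nonempty X] (c : Finset X → X) (hc : IsChoice c)
    (r : X → X → Prop) (hr : IsSLO r) :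
    (∀ A : Finset X, A.Nonempty →
      Set.ncard {y : X | r y (c A)} ≤ Fintype.card X - 1 ∧
      IsMaxOf (harmful r (Set.ncard {y : X | r y (c A)})) A (c A)) ∧
    ∃ I : Finset ℕ, RSP c r I := by
  obtain ⟨asym, htrans, total⟩ := hr
  have hlt : ∀ a b : X, r a b → Set.ncard {y : X | r y a} < Set.ncard {y : X | r y b} := by
    intro a b hab
    apply Set.ncard_lt_ncard _ (Set.toFinite _)
    constructor
    · intro y hy; exact htrans y a b hy hab
    · intro hsub
      exact asym a a (hsub hab) (hsub hab)
  have key : ∀ A : Finset X, A.Nonempty →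
      Set.ncard {y : X | r y (c A)} ≤ Fintype.card X - 1 ∧
      IsMaxOf (harmful r (Set.ncard {y : X | r y (c A)})) A (c A) := by
    intro A hA
    set i := Set.ncard {y : X | r y (c A)} with hi
    have hbound : i ≤ Fintype.card X - 1 := by
      have hsub : {y : X | r y (c A)} ⊆ Set.univ \ {c A} := by
        intro y hy
        refine ⟨Set.mem_univ _, ?_⟩
        intro hy'
        simp only [Set.mem_singleton_iff] at hy'
        subst hy'
        exact asym _ _ hy hy
      calc i ≤ Set.ncard (Set.univ \ ({c A} : Set X)) :=
              Set.ncard_le_ncard hsub (Set.toFinite _)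
        _ = Fintype.card X - 1 := by
            rw [Set.ncard_diff (by simp), Set.ncard_univ, Set.ncard_singleton, Nat.card_eq_fintype_card]
    have hnot : c A ∉ topSet r i := by
      simp only [topSet, Set.mem_setOf_eq, ← hi]
      omega
    refine ⟨hbound, hc A hA, ?_⟩
    intro y hy hne
    by_cases hytop : y ∈ topSet r i
    · exact Or.inl ⟨hytop, fun h => absurd h hnot⟩
    · refine Or.inr ⟨hnot, hytop, ?_⟩
      rcases total (c A) y (Ne.symm hne) with h | h
      · exact h
      · exact absurd (hlt y (c A) h) (fun hlt' => hytop hlt')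
  refine ⟨key, Finset.range (Fintype.card X), ?_, ?_, ?_⟩
  · exact ⟨0, Finset.mem_range.mpr Fintype.card_pos⟩
  · intro i hi
    have := Finset.mem_range.mp hi
    omega
  · intro A hA
    refine ⟨Set.ncard {y : X | r y (c A)}, ?_, (key A hA).2⟩
    have h1 := (key A hA).1
    have h2 := Fintype.card_pos (α := X)
    exact Finset.mem_range.mpr (by omega)
end

section
/- For every integer k > 1 there exists a finite set X with |X| = 2k and a choice function c on X such that every choice function c′ on X satisfying c′(A) = c(A) for all menus A of cardinality at least k is inconsistent. Consequently, the property of a choice function of being NOT inconsistent is a tail-fail property. -/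
variable {X : Type*}

section Aux
variable {n : ℕ} [NeZero n]
open scoped Fin.CommRing

lemma fin_shift_ne (a : Fin n) (c : ℕ) (h1 : 0 < c) (h2 : c < n) :
    a + (c : ℕ) ≠ a := by
  intro h
  have h0 : ((c : ℕ) : Fin n) = 0 := by linear_combination h
  have hv : ((c : Fin n) : ℕ) = c := Fin.val_cast_of_lt h2
  rw [h0] at hv
  simp at hv
  omega

lemma fin_add_one_ne (hn : 2 ≤ n) (a : Fin n) : a + 1 ≠ a := by
  have := fin_shift_ne a 1 one_pos (by omega)
  simpa using this

lemma fin_add_two_ne (hn : 3 ≤ n) (a : Fin n) : a + 2 ≠ a := by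
  have := fin_shift_ne a 2 (by omega) (by omega)
  simpa using this

lemma fin_sub_one_ne (hn : 2 ≤ n) (a : Fin n) : a - 1 ≠ a := by
  intro h
  exact fin_add_one_ne hn (a - 1) (by linear_combination -h)

lemma fin_sub_one_ne_add_one (hn : 3 ≤ n) (a : Fin n) : a - 1 ≠ a + 1 := by
  intro h
  exact fin_add_two_ne hn (a - 1) (by linear_combination -h)

lemma fin_sub_one_ne_add_two (hn : 4 ≤ n) (a : Fin n) : a - 1 ≠ a + 2 := by
  intro h
  have h3 := fin_shift_ne (a - 1) 3 (by omega) (by omega)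
  apply h3
  have hc : ((3:ℕ) : Fin n) = 3 := by norm_cast
  rw [hc]
  linear_combination -h

noncomputable def myc (A : Finset (Fin n)) : Fin n :=
  if h1 : ∃ z : Fin n, Aᶜ = {z} then h1.choose + 1
  else if h2 : ∃ z : Fin n, Aᶜ = {z, z + 1} then h2.choose - 1
  else if h3 : A.Nonempty then A.min' h3
  else ⟨0, Nat.pos_of_ne_zero (NeZero.ne n)⟩

lemma myc_single (z : Fin n) : myc ({z}ᶜ : Finset (Fin n)) = z + 1 := by
  have hc : ({z}ᶜ : Finset (Fin n))ᶜ = {z} := compl_compl _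
  have h1 : ∃ w : Fin n, ({z}ᶜ : Finset (Fin n))ᶜ = {w} := ⟨z, hc⟩
  rw [myc, dif_pos h1]
  set w := h1.choose with hw
  have hspec := h1.choose_spec
  rw [← hw, hc] at hspec
  have : z = w := Finset.singleton_injective hspec
  rw [← this]

lemma myc_pair (hn : 4 ≤ n) (z : Fin n) :
    myc ({z, z + 1}ᶜ : Finset (Fin n)) = z - 1 := by
  have hc : ({z, z+1}ᶜ : Finset (Fin n))ᶜ = {z, z+1} := compl_compl _
  have hzne : z ≠ z + 1 := fun h => fin_add_one_ne (by omega) z h.symm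
  have h1 : ¬ ∃ w : Fin n, ({z, z+1}ᶜ : Finset (Fin n))ᶜ = {w} := by
    rintro ⟨w, hw⟩
    rw [hc] at hw
    have c2 : ({z, z+1} : Finset (Fin n)).card = 2 := Finset.card_pair hzne
    rw [hw] at c2
    simp at c2
  have h2 : ∃ w : Fin n, ({z, z+1}ᶜ : Finset (Fin n))ᶜ = {w, w + 1} := ⟨z, hc⟩
  rw [myc, dif_neg h1, dif_pos h2]
  have hspec := h2.choose_spec
  set w := h2.choose with hwdef
  rw [hc] at hspec
  -- hspec : {z, z+1} = {w, w+1}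
  have hwz : w = z := by
    have hw1 : w ∈ ({z, z+1} : Finset (Fin n)) := by rw [hspec]; simp
    simp only [Finset.mem_insert, Finset.mem_singleton] at hw1
    rcases hw1 with h | h
    · exact h
    · exfalso
      have hz1 : z ∈ ({w, w+1} : Finset (Fin n)) := by rw [← hspec]; simp
      simp only [Finset.mem_insert, Finset.mem_singleton] at hz1
      rcases hz1 with h' | h'
      · exact fin_add_one_ne (by omega) z (h'.trans h).symm
      · rw [h] at h'
        exact fin_add_two_ne (by omega) z (by linear_combination -h')
  rw [hwz]

lemma myc_ischoice (hn : 4 ≤ n) : IsChoice (myc (n := n)) := by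
  intro A hA
  rw [myc]
  split_ifs with h1 h2
  · have hspec := h1.choose_spec
    by_contra hcon
    have hm : h1.choose + 1 ∈ Aᶜ := Finset.mem_compl.mpr hcon
    have hm2 := (Finset.ext_iff.mp hspec _).mp hm
    rw [Finset.mem_singleton] at hm2
    exact fin_add_one_ne (by omega) _ hm2
  · have hspec := h2.choose_spec
    by_contra hcon
    have hm : h2.choose - 1 ∈ Aᶜ := Finset.mem_compl.mpr hcon
    have hm2 := (Finset.ext_iff.mp hspec _).mp hm
    simp only [Finset.mem_insert, Finset.mem_singleton] at hm2
    rcases hm2 with h | h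
    · exact fin_sub_one_ne (by omega) _ h
    · exact fin_sub_one_ne_add_one (by omega) _ h
  · exact A.min'_mem hA

lemma myc_cover (hn : 4 ≤ n) (x y : Fin n) (hxy : x ≠ y) :
    ∃ A : Finset (Fin n), x ∈ A ∧ y ∈ A ∧ n - 2 ≤ A.card ∧ myc A = x := by
  by_cases hc : x = y + 1
  · refine ⟨({x + 1, x + 2}ᶜ : Finset (Fin n)), ?_, ?_, ?_, ?_⟩
    · simp only [Finset.mem_compl, Finset.mem_insert, Finset.mem_singleton]
      push_neg
      exact ⟨fun h => fin_add_one_ne (by omega) x h.symm,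
             fun h => fin_add_two_ne (by omega) x h.symm⟩
    · simp only [Finset.mem_compl, Finset.mem_insert, Finset.mem_singleton]
      push_neg
      have hy : y = x - 1 := by linear_combination -hc
      rw [hy]
      exact ⟨fin_sub_one_ne_add_one (by omega) x, fin_sub_one_ne_add_two hn x⟩
    · have : ({x + 1, x + 2} : Finset (Fin n)).card ≤ 2 := by
        apply le_trans (Finset.card_insert_le _ _); simp
      rw [Finset.card_compl, Fintype.card_fin]
      omega
    · have h := myc_pair hn (x + 1)
      have e2 : x + 1 + 1 = x + 2 := by ring
      rw [e2] at h
      rw [h]; ring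
  · refine ⟨({x - 1}ᶜ : Finset (Fin n)), ?_, ?_, ?_, ?_⟩
    · simp only [Finset.mem_compl, Finset.mem_singleton]
      exact fun h => fin_sub_one_ne (by omega) x h.symm
    · simp only [Finset.mem_compl, Finset.mem_singleton]
      intro h
      exact hc (by linear_combination -h)
    · rw [Finset.card_compl, Fintype.card_fin, Finset.card_singleton]
      omega
    · rw [myc_single (x - 1)]; ring

lemma key_part1 (k : ℕ) (hk : 1 < k) :
    ∃ c : Finset (Fin (2 * k)) → Fin (2 * k), IsChoice c ∧
      ∀ c' : Finset (Fin (2 * k)) → Fin (2 * k), IsChoice c' →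
        (∀ A : Finset (Fin (2 * k)), A.Nonempty → k ≤ A.card → c' A = c A) →
        Inconsistent c' := by
  have : NeZero (2 * k) := ⟨by omega⟩
  have hn : 4 ≤ 2 * k := by omega
  refine ⟨myc, myc_ischoice hn, ?_⟩
  intro c' _ hagree x y hxy
  obtain ⟨A, hxA, hyA, hcardA, hcA⟩ := myc_cover hn x y hxy
  obtain ⟨B, hyB, hxB, hcardB, hcB⟩ := myc_cover hn y x (Ne.symm hxy)
  have hAne : A.Nonempty := Finset.card_pos.mp (by omega)
  have hBne : B.Nonempty := Finset.card_pos.mp (by omega)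
  have hA' : c' A = x := by rw [hagree A hAne (by omega), hcA]
  have hB' : c' B = y := by rw [hagree B hBne (by omega), hcB]
  refine ⟨A, B, ⟨hAne, hBne, ?_, ?_, ?_, ?_⟩, hA', hB'⟩
  · intro h; rw [h, hB'] at hA'; exact hxy hA'.symm
  · rw [hA', hB']; exact hxy
  · rw [hA']; exact Finset.mem_inter.mpr ⟨hxA, hxB⟩
  · rw [hB']; exact Finset.mem_inter.mpr ⟨hyA, hyB⟩

end Aux

theorem stmt2 :
    (∀ k : ℕ, 1 < k →
      ∃ c : Finset (Fin (2 * k)) → Fin (2 * k), IsChoice c ∧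
        ∀ c' : Finset (Fin (2 * k)) → Fin (2 * k), IsChoice c' →
          (∀ A : Finset (Fin (2 * k)), A.Nonempty → k ≤ A.card → c' A = c A) →
          Inconsistent c') ∧
    (∀ k : ℕ, ∃ n : ℕ, k < n ∧
      ∃ c : Finset (Fin n) → Fin n, IsChoice c ∧
        ∀ c' : Finset (Fin n) → Fin n, IsChoice c' →
          (∀ A : Finset (Fin n), A.Nonempty → k ≤ A.card → c' A = c A) →
          Inconsistent c') := by
  constructor
  · exact key_part1
  · intro k
    refine ⟨2 * (k + 2), by omega, ?_⟩
    obtain ⟨c, hc, hmain⟩ := key_part1 (k + 2) (by omega)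
    refine ⟨c, hc, fun c' hc' hagree => hmain c' hc' ?_⟩
    intro A hA hcard
    exact hagree A hA (by omega)
end

section
/- Let c be a choice function on a finite nonempty set X with |X| ≥ 2. Then c is weakly harmful (i.e., sp(c) = 1) if and only if c violates WARP under constant selection, i.e., c has at least one reversal and there exists x* ∈ X such that every reversal (A, B) of c satisfies c(A) = x* or c(B) = x*. -/
variable {X : Type*}
set_option linter.unusedSectionVars false

section SelfPunishAux

variable [Fintype X] [DecidableEq X]

lemma topSet_zero (r : X → X → Prop) : topSet r 0 = (∅ : Set X) := by
  ext a; simp [topSet]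

lemma harmful_zero (r : X → X → Prop) : harmful r 0 = r := by
  funext a b; simp [harmful, topSet_zero]

lemma mem_topSet_one {r : X → X → Prop} {a : X} :
    a ∈ topSet r 1 ↔ ∀ b, ¬ r b a := by
  simp [topSet, Nat.lt_one_iff, Set.ncard_eq_zero (Set.toFinite _),
    Set.eq_empty_iff_forall_notMem]

lemma exists_isMaxOf {r : X → X → Prop} (hr : IsSLO r) {A : Finset X} (hA : A.Nonempty) :
    ∃ m, IsMaxOf r A m := by
  obtain ⟨hasym, htrans, htot⟩ := hr
  induction hA using Finset.Nonempty.cons_induction with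
  | singleton a =>
      refine ⟨a, Finset.mem_singleton_self a, ?_⟩
      intro y hy hne
      rw [Finset.mem_singleton] at hy
      exact absurd hy hne
  | cons a s h hs ih =>
      obtain ⟨m, hmA, hm⟩ := ih
      have ham : a ≠ m := fun e => h (e ▸ hmA)
      rcases htot a m ham with h1 | h2
      · refine ⟨a, Finset.mem_cons_self a s, ?_⟩
        intro y hy hne
        rw [Finset.mem_cons] at hy
        rcases hy with rfl | hy
        · exact absurd rfl hne
        · rcases eq_or_ne y m with rfl | hym
          · exact h1
          · exact htrans a m y h1 (hm y hy hym)
      · refine ⟨m, Finset.mem_cons.mpr (Or.inr hmA), ?_⟩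
        intro y hy hne
        rw [Finset.mem_cons] at hy
        rcases hy with rfl | hy
        · exact h2
        · exact hm y hy hne

lemma topSet_one_eq {r : X → X → Prop} (hr : IsSLO r) {m : X}
    (hm : IsMaxOf r Finset.univ m) : topSet r 1 = ({m} : Set X) := by
  ext a
  rw [mem_topSet_one, Set.mem_singleton_iff]
  constructor
  · intro h
    by_contra hne
    exact h m (hm.2 a (Finset.mem_univ a) hne)
  · intro ha
    subst ha
    intro b hb
    rcases eq_or_ne b a with rfl | hbm
    · exact hr.1 b b hb hb
    · exact hr.1 a b (hm.2 b (Finset.mem_univ b) hbm) hb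

lemma mk_reversal {c : Finset X → X} (hc : IsChoice c) {A B : Finset X}
    (hA : A.Nonempty) (hB : B.Nonempty) (hne : c A ≠ c B)
    (h1 : c A ∈ B) (h2 : c B ∈ A) : IsReversal c A B :=
  ⟨hA, hB, fun e => hne (by rw [e]), hne,
    Finset.mem_inter.mpr ⟨hc A hA, h1⟩, Finset.mem_inter.mpr ⟨h2, hc B hB⟩⟩

lemma pair_choice {c : Finset X → X} (hc : IsChoice c)
    (nr : ¬ ∃ A B : Finset X, IsReversal c A B) :
    ∀ A : Finset X, A.Nonempty → ∀ z ∈ A, z ≠ c A → c {c A, z} = c A := by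
  intro A hA z hz hne
  have hP : ({c A, z} : Finset X).Nonempty := ⟨c A, Finset.mem_insert_self _ _⟩
  rcases Finset.mem_insert.mp (hc _ hP) with h | h
  · exact h
  · rw [Finset.mem_singleton] at h
    exfalso
    refine nr ⟨A, {c A, z}, mk_reversal hc hA hP ?_ (Finset.mem_insert_self _ _) ?_⟩
    · rw [h]; exact fun e => hne e.symm
    · rw [h]; exact hz

lemma no_reversal_rationalizable {c : Finset X → X} (hc : IsChoice c)
    (nr : ¬ ∃ A B : Finset X, IsReversal c A B) :
    ∃ r : X → X → Prop, IsSLO r ∧ ∀ A : Finset X, A.Nonempty → IsMaxOf r A (c A) := by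
  refine ⟨fun y z => y ≠ z ∧ c {y, z} = y, ⟨?_, ?_, ?_⟩, ?_⟩
  · rintro a b ⟨hne, hab⟩ ⟨-, hba⟩
    rw [Finset.pair_comm b a] at hba
    exact hne (hab.symm.trans hba)
  · rintro a b d ⟨hab, h1⟩ ⟨hbd, h2⟩
    have had : a ≠ d := by
      rintro rfl
      rw [Finset.pair_comm b a] at h2
      exact hab (h1.symm.trans h2)
    refine ⟨had, ?_⟩
    have hTne : ({a, b, d} : Finset X).Nonempty := ⟨a, Finset.mem_insert_self _ _⟩
    have key := pair_choice hc nr {a, b, d} hTne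
    have hcT := hc _ hTne
    simp only [Finset.mem_insert, Finset.mem_singleton] at hcT
    rcases hcT with h | h | h
    · have := key d (by simp) (by rw [h]; exact fun e => had e.symm)
      rw [h] at this
      exact this
    · have := key a (by simp) (by rw [h]; exact fun e => hab e)
      rw [h, Finset.pair_comm b a] at this
      exact absurd (h1.symm.trans this) hab
    · have := key b (by simp) (by rw [h]; exact fun e => hbd e)
      rw [h, Finset.pair_comm d b] at this
      exact absurd (h2.symm.trans this) hbd
  · intro a b hab
    have hP : ({a, b} : Finset X).Nonempty := ⟨a, Finset.mem_insert_self _ _⟩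
    rcases Finset.mem_insert.mp (hc _ hP) with h | h
    · exact Or.inl ⟨hab, h⟩
    · rw [Finset.mem_singleton] at h
      refine Or.inr ⟨hab.symm, ?_⟩
      rw [Finset.pair_comm b a]
      exact h
  · intro A hA
    refine ⟨hc A hA, ?_⟩
    intro y hy hne
    exact ⟨hne.symm, pair_choice hc nr A hA y hy hne⟩

end SelfPunishAux


theorem stmt3 [Fintype X] [DecidableEq X] (c : Finset X → X) (hc : IsChoice c)
    (hcard : 2 ≤ Fintype.card X) :
    sp c = 1 ↔
      ((∃ A B : Finset X, IsReversal c A B) ∧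
        ∃ x : X, ∀ A B : Finset X, IsReversal c A B → c A = x ∨ c B = x) := by
  set S := { m : ℕ | ∃ r : X → X → Prop, IsSLO r ∧ ∃ I : Finset ℕ,
    RSP c r I ∧ m ∈ I ∧ ∀ i ∈ I, i ≤ m } with hS
  have hsp : sp c = sInf S := rfl
  have hXne : Nonempty X := Fintype.card_pos_iff.mp (by omega)
  constructor
  · intro h1
    rw [hsp] at h1
    have hne : S.Nonempty := by
      by_contra hemp
      rw [Set.not_nonempty_iff_eq_empty] at hemp
      rw [hemp, Nat.sInf_empty] at h1
      exact one_ne_zero h1.symm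
    have h1S : (1 : ℕ) ∈ S := h1 ▸ Nat.sInf_mem hne
    have h0S : (0 : ℕ) ∉ S := by
      intro h0
      have := Nat.sInf_le h0
      omega
    have hrev : ∃ A B : Finset X, IsReversal c A B := by
      by_contra nr
      apply h0S
      obtain ⟨r, hr, hmax⟩ := no_reversal_rationalizable hc nr
      refine ⟨r, hr, {0}, ⟨⟨0, Finset.mem_singleton_self 0⟩, ?_, ?_⟩,
        Finset.mem_singleton_self 0, ?_⟩
      · intro i hi
        rw [Finset.mem_singleton] at hi
        omega
      · intro A hA
        exact ⟨0, Finset.mem_singleton_self 0, by rw [harmful_zero]; exact hmax A hA⟩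
      · intro i hi
        rw [Finset.mem_singleton] at hi
        omega
    obtain ⟨r, hr, I, ⟨hIne, hIcard, hmax⟩, h1I, hIle⟩ := h1S
    obtain ⟨m, hm⟩ := exists_isMaxOf hr (Finset.univ_nonempty (α := X))
    refine ⟨hrev, m, ?_⟩
    intro A B hAB
    by_contra hcon
    push_neg at hcon
    obtain ⟨hAm, hBm⟩ := hcon
    obtain ⟨hAne, hBne, -, hne, hA2, hB2⟩ := hAB
    rw [Finset.mem_inter] at hA2 hB2
    obtain ⟨iA, hiA, hmaxA⟩ := hmax A hAne
    obtain ⟨iB, hiB, hmaxB⟩ := hmax B hBne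
    have hdom : ∀ i, i ≤ 1 → ∀ (C : Finset X) (y z : X), IsMaxOf (harmful r i) C y →
        z ∈ C → z ≠ y → z ≠ m → r y z := by
      intro i hi C y z hmx hz hzy hzm
      interval_cases i
      · rw [harmful_zero] at hmx
        exact hmx.2 z hz hzy
      · rcases hmx.2 z hz hzy with ⟨htop, -⟩ | ⟨-, -, h⟩
        · rw [topSet_one_eq hr hm] at htop
          exact absurd htop hzm
        · exact h
    exact hr.1 _ _ (hdom iA (hIle iA hiA) A (c A) (c B) hmaxA hB2.1 (Ne.symm hne) hBm)
      (hdom iB (hIle iB hiB) B (c B) (c A) hmaxB hA2.2 hne hAm)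
  · rintro ⟨⟨A₀, B₀, hrev⟩, x, hx⟩
    have h0S : (0 : ℕ) ∉ S := by
      rintro ⟨r, hr, I, ⟨-, -, hmax⟩, h0I, hIle⟩
      obtain ⟨hAne, hBne, -, hne, hA2, hB2⟩ := hrev
      rw [Finset.mem_inter] at hA2 hB2
      obtain ⟨i, hi, hmaxA⟩ := hmax A₀ hAne
      obtain ⟨i', hi', hmaxB⟩ := hmax B₀ hBne
      have hi0 : i = 0 := Nat.le_zero.mp (hIle i hi)
      have hi'0 : i' = 0 := Nat.le_zero.mp (hIle i' hi')
      subst hi0; subst hi'0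
      rw [harmful_zero] at hmaxA hmaxB
      exact hr.1 _ _ (hmaxA.2 _ hB2.1 (Ne.symm hne)) (hmaxB.2 _ hA2.2 hne)
    have h1S : (1 : ℕ) ∈ S := by
      -- asymmetry of the x-avoiding revealed preference
      have hPasym : ∀ y z : X, y ≠ z →
          (∃ A : Finset X, x ∉ A ∧ z ∈ A ∧ c A = y) →
          (∃ B : Finset X, x ∉ B ∧ y ∈ B ∧ c B = z) → False := by
        rintro y z hyz ⟨A, hxA, hzA, hcA⟩ ⟨B, hxB, hyB, hcB⟩
        have hyx : y ≠ x := by rintro rfl; exact hxB hyB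
        have hzx : z ≠ x := by rintro rfl; exact hxA hzA
        have := hx A B (mk_reversal hc ⟨z, hzA⟩ ⟨y, hyB⟩
          (by rw [hcA, hcB]; exact hyz) (by rw [hcA]; exact hyB) (by rw [hcB]; exact hzA))
        rw [hcA, hcB] at this
        rcases this with h | h
        · exact hyx h
        · exact hzx h
      -- transitivity of the x-avoiding revealed preference
      have hPtrans : ∀ y z w : X, y ≠ z →
          (∃ A : Finset X, x ∉ A ∧ z ∈ A ∧ c A = y) →
          (∃ B : Finset X, x ∉ B ∧ w ∈ B ∧ c B = z) →
          (∃ C : Finset X, x ∉ C ∧ w ∈ C ∧ c C = y) := by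
        rintro y z w hyz ⟨A, hxA, hzA, hcA⟩ ⟨B, hxB, hwB, hcB⟩
        have hxu : x ∉ A ∪ B := by
          rw [Finset.mem_union]; rintro (h | h); exacts [hxA h, hxB h]
        have hune : (A ∪ B).Nonempty := ⟨z, Finset.mem_union_left _ hzA⟩
        have hu := hc _ hune
        have hux : c (A ∪ B) ≠ x := by rintro h; exact hxu (h ▸ hu)
        have hyx : y ≠ x := by rintro rfl; exact hxA (hcA ▸ hc A ⟨z, hzA⟩)
        have hzx : z ≠ x := by rintro rfl; exact hxA hzA
        have huy : c (A ∪ B) = y := by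
          by_contra hney
          have huA : c (A ∪ B) ∈ A := by
            rcases Finset.mem_union.mp hu with h | h
            · exact h
            · rcases eq_or_ne (c (A ∪ B)) z with he | hnez
              · rw [he]; exact hzA
              · exfalso
                have := hx B (A ∪ B) (mk_reversal hc ⟨w, hwB⟩ hune
                  (by rw [hcB]; exact fun e => hnez e.symm)
                  (by rw [hcB]; exact Finset.mem_union_left _ hzA) h)
                rcases this with h' | h'
                · rw [hcB] at h'; exact hzx h'
                · exact hux h'
          have := hx A (A ∪ B) (mk_reversal hc ⟨z, hzA⟩ hune
            (by rw [hcA]; exact fun e => hney e.symm)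
            (by rw [hcA]; exact Finset.mem_union_left _ (hcA ▸ hc A ⟨z, hzA⟩)) huA)
          rcases this with h' | h'
          · rw [hcA] at h'; exact hyx h'
          · exact hux h'
        exact ⟨A ∪ B, hxu, Finset.mem_union_right _ hwB, huy⟩
      -- the reflexive closure of cxPref c x is a partial order
      haveI hpo : IsPartialOrder X (fun y z : X => y = z ∨ cxPref c x y z) := by
        refine { refl := fun a => Or.inl rfl, trans := ?_, antisymm := ?_ }
        · rintro a b d (rfl | hab) h2
          · exact h2
          · rcases h2 with rfl | hbd
            · exact Or.inr hab
            · rcases hab with ⟨rfl, hbx⟩ | ⟨hax, hbx, hab', hPab⟩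
              · rcases hbd with ⟨he, -⟩ | ⟨-, hdx, -, -⟩
                · exact absurd he hbx
                · exact Or.inr (Or.inl ⟨rfl, hdx⟩)
              · rcases hbd with ⟨he, -⟩ | ⟨-, hdx, hbd', hPbd⟩
                · exact absurd he hbx
                · rcases eq_or_ne a d with rfl | had
                  · exact Or.inl rfl
                  · exact Or.inr (Or.inr ⟨hax, hdx, had, hPtrans a b d hab' hPab hPbd⟩)
        · rintro a b (rfl | hab) h2
          · rfl
          · rcases h2 with rfl | hba
            · rfl
            · exfalso
              rcases hab with ⟨rfl, hbx⟩ | ⟨hax, hbx, hab', hPab⟩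
              · rcases hba with ⟨he, -⟩ | ⟨-, hax, -, -⟩
                · exact hbx he
                · exact hax rfl
              · rcases hba with ⟨he, -⟩ | ⟨-, -, -, hPba⟩
                · exact hbx he
                · exact hPasym a b hab' hPab hPba
      obtain ⟨s, hs, hsub⟩ := extend_partialOrder (fun y z : X => y = z ∨ cxPref c x y z)
      haveI := hs
      set r : X → X → Prop := fun a b => a ≠ b ∧ s a b with hrdef
      have hcxr : ∀ y z : X, cxPref c x y z → r y z := by
        intro y z h
        have hyz : y ≠ z := by
          rcases h with ⟨rfl, hzx⟩ | ⟨-, -, h', -⟩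
          · exact fun e => hzx e.symm
          · exact h'
        exact ⟨hyz, hsub y z (Or.inr h)⟩
      have hrslo : IsSLO r := by
        refine ⟨?_, ?_, ?_⟩
        · rintro a b ⟨hab, h1⟩ ⟨-, h2⟩
          exact hab (antisymm_of s h1 h2)
        · rintro a b d ⟨hab, h1⟩ ⟨hbd, h2⟩
          refine ⟨?_, trans_of s h1 h2⟩
          rintro rfl
          exact hab (antisymm_of s h1 h2)
        · intro a b hab
          rcases total_of s a b with h | h
          · exact Or.inl ⟨hab, h⟩
          · exact Or.inr ⟨hab.symm, h⟩
      have htop : topSet r 1 = ({x} : Set X) := by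
        ext a
        rw [mem_topSet_one, Set.mem_singleton_iff]
        constructor
        · intro h
          by_contra hax
          exact h x (hcxr x a (Or.inl ⟨rfl, hax⟩))
        · intro ha
          subst ha
          rintro b ⟨hbx, hsbx⟩
          have := hcxr a b (Or.inl ⟨rfl, hbx⟩)
          exact hbx (antisymm_of s hsbx this.2)
      have hshrink : ∀ A : Finset X, A.Nonempty → x ∈ A → c A ≠ x → c (A.erase x) = c A := by
        intro A hA hxA hcx
        have hyA' : c A ∈ A.erase x := Finset.mem_erase.mpr ⟨hcx, hc A hA⟩
        have hA'ne : (A.erase x).Nonempty := ⟨c A, hyA'⟩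
        by_contra hne
        have hrr := mk_reversal hc hA hA'ne (fun e => hne e.symm) hyA'
          (Finset.mem_of_mem_erase (hc _ hA'ne))
        rcases hx _ _ hrr with h | h
        · exact hcx h
        · exact (Finset.mem_erase.mp (hc _ hA'ne)).1 h
      refine ⟨r, hrslo, ({0, 1} : Finset ℕ), ⟨⟨0, by simp⟩, ?_, ?_⟩, by simp, ?_⟩
      · intro i hi
        rw [Finset.mem_insert, Finset.mem_singleton] at hi
        rcases hi with rfl | rfl
        · omega
        · omega
      · intro A hA
        by_cases hcx : c A = x
        · refine ⟨0, by simp, ?_⟩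
          rw [harmful_zero]
          refine ⟨hc A hA, ?_⟩
          intro z hz hne
          exact hcxr _ _ (Or.inl ⟨hcx, fun e => hne (e.trans hcx.symm)⟩)
        · by_cases hxA : x ∈ A
          · refine ⟨1, by simp, hc A hA, ?_⟩
            intro z hz hne
            rcases eq_or_ne z x with rfl | hzx
            · refine Or.inl ⟨?_, ?_⟩
              · rw [htop]; exact rfl
              · intro hmem
                rw [htop] at hmem
                exact absurd hmem hcx
            · refine Or.inr ⟨?_, ?_, ?_⟩
              · rw [htop]; exact hcx
              · rw [htop]; exact hzx
              · exact hcxr _ _ (Or.inr ⟨hcx, hzx, Ne.symm hne,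
                  ⟨A.erase x, Finset.notMem_erase x A, Finset.mem_erase.mpr ⟨hzx, hz⟩,
                    hshrink A hA hxA hcx⟩⟩)
          · refine ⟨0, by simp, ?_⟩
            rw [harmful_zero]
            refine ⟨hc A hA, ?_⟩
            intro z hz hne
            have hzx : z ≠ x := fun e => hxA (e ▸ hz)
            exact hcxr _ _ (Or.inr ⟨hcx, hzx, Ne.symm hne, ⟨A, hxA, hz, rfl⟩⟩)
      · intro i hi
        rw [Finset.mem_insert, Finset.mem_singleton] at hi
        rcases hi with rfl | rfl
        · omega
        · omega
    have hne : S.Nonempty := ⟨1, h1S⟩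
    have hle := Nat.sInf_le h1S
    have hne0 : sInf S ≠ 0 := fun h => h0S (h ▸ Nat.sInf_mem hne)
    rw [hsp]
    omega
end

section
/- Let c be a choice function on a finite nonempty set X that violates WARP under constant selection, and let x* ∈ X be an item such that every reversal (A, B) of c satisfies c(A) = x* or c(B) = x*. Define the binary relation ▷^{c,x*} on X by: x* ▷^{c,x*} y for every y ∈ X \ {x*}, and for distinct y, z ∈ X \ {x*}, y ▷^{c,x*} z iff there is a menu A with x* ∉ A, z ∈ A and y = c(A). Then ▷^{c,x*} is a strict linear order on X (asymmetric, transitive, complete). -/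
variable {X : Type*}

lemma noRev_aux [DecidableEq X] (c : Finset X → X) (hc : IsChoice c) (x : X)
    (hconst : ∀ A B : Finset X, IsReversal c A B → c A = x ∨ c B = x)
    {A B : Finset X} (hxA : x ∉ A) (hxB : x ∉ B)
    (hAB : c A ∈ B) (hBA : c B ∈ A) (hne : c A ≠ c B) : False := by
  have hAne : A.Nonempty := ⟨c B, hBA⟩
  have hBne : B.Nonempty := ⟨c A, hAB⟩
  have hA : c A ∈ A := hc A hAne
  have hB : c B ∈ B := hc B hBne
  have hABne : A ≠ B := fun h => hne (by rw [h])
  have hrev : IsReversal c A B :=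
    ⟨hAne, hBne, hABne, hne, Finset.mem_inter.2 ⟨hA, hAB⟩, Finset.mem_inter.2 ⟨hBA, hB⟩⟩
  rcases hconst A B hrev with h | h
  · exact hxA (h ▸ hA)
  · exact hxB (h ▸ hB)

theorem stmt4 [Fintype X] [DecidableEq X] (c : Finset X → X) (hc : IsChoice c)
    (x : X)
    (hrev : ∃ A B : Finset X, IsReversal c A B)
    (hconst : ∀ A B : Finset X, IsReversal c A B → c A = x ∨ c B = x) :
    IsSLO (cxPref c x) := by
  refine ⟨?_, ?_, ?_⟩
  · rintro a b (⟨ha, hb⟩ | ⟨ha, hb, hab, A, hxA, hbA, hcA⟩)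
    · rintro (⟨hb', _⟩ | ⟨_, ha', _⟩)
      · exact hb hb'
      · exact ha' ha
    · rintro (⟨hb', _⟩ | ⟨_, _, _, B, hxB, haB, hcB⟩)
      · exact hb hb'
      · subst hcA; subst hcB
        exact noRev_aux c hc x hconst hxA hxB haB hbA hab
  · rintro a b d hab hbd
    rcases hab with ⟨ha, hb⟩ | ⟨ha, hb, hab', A, hxA, hbA, hcA⟩
    · rcases hbd with ⟨hb', _⟩ | ⟨_, hd, _, _⟩
      · exact absurd hb' hb
      · exact Or.inl ⟨ha, hd⟩
    · rcases hbd with ⟨hb', _⟩ | ⟨_, hd, hbd', B, hxB, hdB, hcB⟩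
      · exact absurd hb' hb
      · subst hcA; subst hcB
        have had : c A ≠ d := fun h =>
          noRev_aux c hc x hconst hxA hxB (by rw [h]; exact hdB) hbA hab' 
        refine Or.inr ⟨ha, hd, had, A ∪ B, ?_, Finset.mem_union_right _ hdB, ?_⟩
        · simp [hxA, hxB]
        · have hUne : (A ∪ B).Nonempty := ⟨d, Finset.mem_union_right _ hdB⟩
          have hU : c (A ∪ B) ∈ A ∪ B := hc _ hUne
          have hxU : x ∉ A ∪ B := by simp [hxA, hxB]
          have hAU : c A ∈ A ∪ B := Finset.mem_union_left _ (hc A ⟨c B, hbA⟩)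
          have hBU : c B ∈ A ∪ B := Finset.mem_union_right _ (hc B ⟨d, hdB⟩)
          rcases Finset.mem_union.1 hU with hUA | hUB
          · by_contra hne
            exact noRev_aux c hc x hconst hxA hxU hAU hUA fun h => hne h.symm
          · have hUb : c (A ∪ B) = c B := by
              by_contra hne
              exact noRev_aux c hc x hconst hxB hxU hBU hUB fun h => hne h.symm
            by_contra hne
            exact noRev_aux c hc x hconst hxA hxU hAU (hUb ▸ hbA) fun h => hne h.symm
  · intro a b hab
    by_cases ha : a = x
    · refine Or.inl (Or.inl ⟨ha, fun hb => hab (ha.trans hb.symm)⟩)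
    · by_cases hb : b = x
      · exact Or.inr (Or.inl ⟨hb, ha⟩)
      · have hxab : x ∉ ({a, b} : Finset X) := by
          simp only [Finset.mem_insert, Finset.mem_singleton]
          push_neg
          exact ⟨Ne.symm ha, Ne.symm hb⟩
        have hmem : c {a, b} ∈ ({a, b} : Finset X) := hc _ ⟨a, by simp⟩
        rcases Finset.mem_insert.1 hmem with h | h
        · exact Or.inl (Or.inr ⟨ha, hb, hab, {a, b}, hxab, by simp, h⟩)
        · exact Or.inr (Or.inr ⟨hb, ha, Ne.symm hab, {a, b}, hxab, by simp,
            Finset.mem_singleton.1 h⟩)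
end

section
/- Let c be a choice function on a finite nonempty set X that violates WARP under constant selection, and let x* ∈ X be an item such that every reversal (A, B) of c satisfies c(A) = x* or c(B) = x*. Let ▷^{c,x*} be the strict linear order on X defined by: x* ▷^{c,x*} y for every y ∈ X \ {x*}, and for distinct y, z ∈ X \ {x*}, y ▷^{c,x*} z iff there is a menu A with x* ∉ A, z ∈ A and y = c(A). Then the pair {▷^{c,x*}, ▷^{c,x*}_1} is a rationalization by self-punishment of c by ▷^{c,x*}: for every menu A, either c(A) = max(A, ▷^{c,x*}) or c(A) = max(A, ▷^{c,x*}_1). -/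
variable {X : Type*}

theorem stmt5 [Fintype X] [DecidableEq X] (c : Finset X → X) (hc : IsChoice c)
    (x : X)
    (hrev : ∃ A B : Finset X, IsReversal c A B)
    (hconst : ∀ A B : Finset X, IsReversal c A B → c A = x ∨ c B = x) :
    ∀ A : Finset X, A.Nonempty →
      IsMaxOf (cxPref c x) A (c A) ∨ IsMaxOf (harmful (cxPref c x) 1) A (c A) := by
  have htop : ∀ a : X, a ∈ topSet (cxPref c x) 1 ↔ a = x := by
    intro a
    constructor
    · intro h
      by_contra hne
      have hx : x ∈ {b | cxPref c x b a} := Or.inl ⟨rfl, hne⟩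
      have hpos : 0 < Set.ncard {b | cxPref c x b a} :=
        (Set.ncard_pos (Set.toFinite _)).2 ⟨x, hx⟩
      have : Set.ncard {b | cxPref c x b a} < 1 := h
      omega
    · intro h; subst h
      have hempty : {b | cxPref c a b a} = (∅ : Set X) := by
        ext b; simp only [Set.mem_setOf_eq, Set.mem_empty_iff_false, iff_false]
        rintro (⟨_, hxx⟩ | ⟨_, hxx, _⟩) <;> exact hxx rfl
      show Set.ncard {b | cxPref c a b a} < 1
      rw [hempty, Set.ncard_empty]
      omega
  intro A hA
  have hcA := hc A hA
  by_cases hax : c A = x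
  · left
    exact ⟨hcA, fun y hy hne => Or.inl ⟨hax, fun h => hne (h.trans hax.symm)⟩⟩
  by_cases hxA : x ∈ A
  · right
    refine ⟨hcA, fun y hy hne => ?_⟩
    by_cases hyx : y = x
    · exact Or.inl ⟨(htop y).2 hyx, fun hmem => absurd ((htop _).1 hmem) hax⟩
    · refine Or.inr ⟨fun hmem => hax ((htop _).1 hmem),
        fun hmem => hyx ((htop _).1 hmem), ?_⟩
      -- need cxPref c x (c A) y
      have hyB : y ∈ A.erase x := Finset.mem_erase.2 ⟨hyx, hy⟩
      have hcB : c (A.erase x) = c A := by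
        by_contra hne'
        have hBmem := hc (A.erase x) ⟨y, hyB⟩
        have hrevAB : IsReversal c A (A.erase x) := by
          refine ⟨hA, ⟨y, hyB⟩, ?_, fun h => hne' h.symm, ?_, ?_⟩
          · intro h
            have : x ∈ A.erase x := h ▸ hxA
            exact (Finset.mem_erase.1 this).1 rfl
          · exact Finset.mem_inter.2 ⟨hcA, Finset.mem_erase.2 ⟨hax, hcA⟩⟩
          · exact Finset.mem_inter.2 ⟨Finset.mem_of_mem_erase hBmem, hBmem⟩
        rcases hconst A (A.erase x) hrevAB with h | h
        · exact hax h
        · exact (Finset.mem_erase.1 hBmem).1 h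
      exact Or.inr ⟨hax, hyx, fun h => hne h.symm,
        A.erase x, fun h => (Finset.mem_erase.1 h).1 rfl, hyB, hcB⟩
  · left
    refine ⟨hcA, fun y hy hne => ?_⟩
    exact Or.inr ⟨hax, fun h => hxA (h ▸ hy), fun h => hne h.symm,
      A, hxA, hy, rfl⟩
end

section
/- Let c be a choice function on a finite nonempty set X that violates WARP under constant selection, and let S be the set of all items x* ∈ X such that every reversal (A, B) of c satisfies c(A) = x* or c(B) = x*. Let ▷ be any strict linear order on X such that ▷ ≠ ▷^{c,x*} for every x* ∈ S (where ▷^{c,x*} is defined by: x* ▷^{c,x*} y for every y ≠ x*, and for distinct y, z ≠ x*, y ▷^{c,x*} z iff there is a menu A with x* ∉ A, z ∈ A and y = c(A)). Then every rationalization by self-punishment Harm_c(▷) of c by ▷ satisfies max{ i : ▷_i ∈ Harm_c(▷) } > 1. -/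
variable {X : Type*}

lemma slo_exists_max {X : Type*} (r : X → X → Prop) (hr : IsSLO r) :
    ∀ s : Finset X, s.Nonempty → ∃ m ∈ s, ∀ b ∈ s, b ≠ m → r m b := by
  intro s
  induction s using Finset.cons_induction with
  | empty => intro h; exact absurd h (by simp)
  | cons a s ha ih =>
    intro _
    rcases s.eq_empty_or_nonempty with rfl | hs'
    · exact ⟨a, by simp, by simp⟩
    · obtain ⟨m, hm, hmax⟩ := ih hs'
      have ham : a ≠ m := fun h => ha (h ▸ hm)
      rcases hr.2.2 a m ham with h | h
      · refine ⟨a, Finset.mem_cons_self a s, fun b hb hba => ?_⟩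
        rcases Finset.mem_cons.mp hb with rfl | hb
        · exact absurd rfl hba
        · by_cases hbm : b = m
          · exact hbm ▸ h
          · exact hr.2.1 a m b h (hmax b hb hbm)
      · refine ⟨m, Finset.mem_cons.mpr (Or.inr hm), fun b hb hbm => ?_⟩
        rcases Finset.mem_cons.mp hb with rfl | hb
        · exact h
        · exact hmax b hb hbm

theorem stmt6 [Fintype X] [DecidableEq X] (c : Finset X → X) (hc : IsChoice c)
    (hrev : ∃ A B : Finset X, IsReversal c A B)
    (hex : ∃ x : X, ∀ A B : Finset X, IsReversal c A B → c A = x ∨ c B = x)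
    (r : X → X → Prop) (hr : IsSLO r)
    (hne : ∀ x : X, (∀ A B : Finset X, IsReversal c A B → c A = x ∨ c B = x) →
      r ≠ cxPref c x) :
    ∀ I : Finset ℕ, RSP c r I → ∃ i ∈ I, 1 < i := by
  intro I hI
  by_contra hcon
  push_neg at hcon
  obtain ⟨A0, B0, hAB0⟩ := hrev
  obtain ⟨x0, _⟩ := hAB0.1
  obtain ⟨m, -, hm'⟩ := slo_exists_max r hr Finset.univ ⟨x0, Finset.mem_univ x0⟩
  have hm : ∀ b, b ≠ m → r m b := fun b hb => hm' b (Finset.mem_univ b) hb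
  have hirr : ∀ a, ¬ r a a := fun a h => hr.1 a a h h
  have hnrm : ∀ b, ¬ r b m := by
    intro b h
    by_cases hb : b = m
    · exact hirr m (hb ▸ h)
    · exact hr.1 _ _ (hm b hb) h
  have ht0 : topSet r 0 = ∅ := by ext a; simp [topSet]
  have ht1 : topSet r 1 = {m} := by
    ext a
    simp only [topSet, Set.mem_setOf_eq, Nat.lt_one_iff, Set.mem_singleton_iff]
    constructor
    · intro h
      have hempty : {b | r b a} = ∅ := (Set.ncard_eq_zero (Set.toFinite _)).mp h
      by_contra ha
      have : m ∈ {b | r b a} := hm a ha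
      rw [hempty] at this
      exact this
    · rintro rfl
      rw [Set.ncard_eq_zero (Set.toFinite _)]
      ext b; simp [hnrm b]
  have h0 : ∀ a b, harmful r 0 a b ↔ r a b := by
    intro a b; simp [harmful, ht0]
  have h1 : ∀ a b, harmful r 1 a b ↔ (b = m ∧ a ≠ m) ∨ (a ≠ m ∧ b ≠ m ∧ r a b) := by
    intro a b
    simp only [harmful, ht1, Set.mem_singleton_iff]
    constructor
    · rintro (⟨hb, h⟩ | ⟨ha, hb, hab⟩)
      · exact Or.inl ⟨hb, fun ha => hnrm b (ha ▸ h ha)⟩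
      · exact Or.inr ⟨ha, hb, hab⟩
    · rintro (⟨rfl, ha⟩ | ⟨ha, hb, hab⟩)
      · exact Or.inl ⟨rfl, fun h => absurd h ha⟩
      · exact Or.inr ⟨ha, hb, hab⟩
  have key : ∀ A : Finset X, A.Nonempty → c A ≠ m →
      ∀ y ∈ A, y ≠ c A → y ≠ m → r (c A) y := by
    intro A hA hcAm y hy hycA hym
    obtain ⟨i, hiI, hiM⟩ := hI.2.2 A hA
    have hi1 : i ≤ 1 := hcon i hiI
    interval_cases i
    · exact (h0 _ _).mp (hiM.2 y hy hycA)
    · rcases (h1 _ _).mp (hiM.2 y hy hycA) with ⟨h, -⟩ | ⟨-, -, h⟩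
      · exact absurd h hym
      · exact h
  have hmS : ∀ A B : Finset X, IsReversal c A B → c A = m ∨ c B = m := by
    intro A B hAB
    by_contra hc'
    push_neg at hc'
    obtain ⟨hAne, hBne, -, hne', hcA, hcB⟩ := hAB
    have h1' := key A hAne hc'.1 (c B) (Finset.mem_inter.mp hcB).1 (Ne.symm hne') hc'.2
    have h2' := key B hBne hc'.2 (c A) (Finset.mem_inter.mp hcA).2 hne' hc'.1
    exact hr.1 _ _ h1' h2'
  apply hne m hmS
  funext y z
  apply propext
  constructor
  · intro h
    by_cases hy : y = m
    · refine Or.inl ⟨hy, fun hz => ?_⟩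
      rw [hy, hz] at h; exact hirr m h
    · have hz : z ≠ m := fun hz => hnrm y (hz ▸ h)
      have hyz : y ≠ z := fun e => hirr z (e ▸ h)
      have hmA : m ∉ ({y, z} : Finset X) := by
        simp only [Finset.mem_insert, Finset.mem_singleton]
        push_neg
        exact ⟨Ne.symm hy, Ne.symm hz⟩
      have hAne : ({y, z} : Finset X).Nonempty := ⟨y, by simp⟩
      have hcy : c {y, z} = y := by
        rcases Finset.mem_insert.mp (hc _ hAne) with hcy | hcz
        · exact hcy
        · rw [Finset.mem_singleton] at hcz
          exfalso
          have := key {y, z} hAne (by rw [hcz]; exact hz) y (by simp)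
            (by rw [hcz]; exact hyz) hy
          rw [hcz] at this
          exact hr.1 _ _ h this
      exact Or.inr ⟨hy, hz, hyz, {y, z}, hmA, by simp, hcy⟩
  · rintro (⟨rfl, hz⟩ | ⟨hy, hz, hyz, A, hmA, hzA, hcA⟩)
    · rcases hr.2.2 y z (fun e => hz e.symm) with h | h
      · exact h
      · exact absurd h (hnrm z)
    · have := key A ⟨z, hzA⟩ (by rw [hcA]; exact hy) z hzA
        (by rw [hcA]; exact Ne.symm hyz) hz
      rw [hcA] at this
      exact this
end

section
/- Let c be a choice function on a finite nonempty set X, let ▷ be a strict linear order on X, and let Harm_c(▷) be a rationalization by self-punishment of c by ▷ such that max{ i : ▷_i ∈ Harm_c(▷) } = 1. Then the ▷-maximum element max(X, ▷) is constantly selected in reversals: every reversal (A, B) of c satisfies c(A) = max(X, ▷) or c(B) = max(X, ▷). -/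
variable {X : Type*}

theorem stmt8 [Fintype X] [DecidableEq X] (c : Finset X → X) (hc : IsChoice c)
    (r : X → X → Prop) (hr : IsSLO r)
    (I : Finset ℕ) (hI : RSP c r I) (h1 : 1 ∈ I) (hmax : ∀ i ∈ I, i ≤ 1)
    (m : X) (hm : IsMaxOf r Finset.univ m) :
    ∀ A B : Finset X, IsReversal c A B → c A = m ∨ c B = m := by
  have nottop : ∀ x : X, x ≠ m → x ∉ topSet r 1 := by
    intro x hx hmem
    simp only [topSet, Set.mem_setOf_eq, Nat.lt_one_iff] at hmem
    have hfin : {b | r b x}.Finite := Set.toFinite _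
    have : {b | r b x} = ∅ := (Set.ncard_eq_zero hfin).mp hmem
    have hmx : r m x := hm.2 x (Finset.mem_univ x) hx
    exact absurd hmx (by intro h; exact (Set.eq_empty_iff_forall_notMem.mp this m) h)
  have key : ∀ A : Finset X, A.Nonempty → c A ≠ m →
      ∀ y ∈ A, y ≠ c A → y ≠ m → r (c A) y := by
    intro A hA hcA y hy hyc hym
    obtain ⟨i, hiI, hmaxA⟩ := hI.2.2 A hA
    have hi : i ≤ 1 := hmax i hiI
    have hh := hmaxA.2 y hy hyc
    interval_cases i
    · rcases hh with ⟨hb, _⟩ | ⟨_, _, hr'⟩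
      · simp [topSet] at hb
      · exact hr'
    · rcases hh with ⟨hb, _⟩ | ⟨_, _, hr'⟩
      · exact absurd hb (nottop y hym)
      · exact hr'
  intro A B hrev
  by_contra h
  push_neg at h
  obtain ⟨hAm, hBm⟩ := h
  obtain ⟨hAne, hBne, _, hne, hcA, hcB⟩ := hrev
  have hcBA : c B ∈ A := (Finset.mem_inter.mp hcB).1
  have hcAB : c A ∈ B := (Finset.mem_inter.mp hcA).2
  have h1 : r (c A) (c B) := key A hAne hAm (c B) hcBA (Ne.symm hne) hBm
  have h2 : r (c B) (c A) := key B hBne hBm (c A) hcAB hne hAm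
  exact hr.1 _ _ h1 h2
end

section
/- Let c be a choice function on a finite nonempty set X, let ▷ be a strict linear order on X with X = {x^▷_1, …, x^▷_{|X|}} enumerated in decreasing ▷-order, and let Harm_c(▷) be a rationalization by self-punishment of c by ▷ with max{ i : ▷_i ∈ Harm_c(▷) } = j for some 0 ≤ j ≤ |X|−1. Then there is no reversal (A, B) of c such that c(A) ≠ x^▷_h ≠ c(B) for every h ∈ {1, …, j}. -/
variable {X : Type*}

theorem stmt9 [Fintype X] [DecidableEq X] (c : Finset X → X) (hc : IsChoice c)
    (r : X → X → Prop) (hr : IsSLO r)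
    (e : ℕ → X)
    (hsurj : ∀ x : X, ∃ h : ℕ, 1 ≤ h ∧ h ≤ Fintype.card X ∧ e h = x)
    (hord : ∀ h i : ℕ, 1 ≤ h → h < i → i ≤ Fintype.card X → r (e h) (e i))
    (j : ℕ) (hj : j ≤ Fintype.card X - 1)
    (I : Finset ℕ) (hI : RSP c r I) (hjI : j ∈ I) (hmax : ∀ i ∈ I, i ≤ j) :
    ¬ ∃ A B : Finset X, IsReversal c A B ∧
      ∀ h : ℕ, 1 ≤ h → h ≤ j → c A ≠ e h ∧ c B ≠ e h := by
  rintro ⟨A, B, ⟨hA, hB, hAB, hne, hcA, hcB⟩, hout⟩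
  obtain ⟨-, -, hrat⟩ := hI
  have key : ∀ (x : X), (∀ h, 1 ≤ h → h ≤ j → x ≠ e h) → ∀ i ∈ I, x ∉ topSet r i := by
    intro x hx i hiI hmem
    have hij : i ≤ j := hmax i hiI
    obtain ⟨h, h1, hcard, hex⟩ := hsurj x
    have hjh : j < h := by
      by_contra hle
      exact hx h h1 (le_of_not_gt hle) hex.symm
    have hsub : (e '' Set.Icc 1 j) ⊆ {b | r b x} := by
      rintro _ ⟨g, ⟨hg1, hgj⟩, rfl⟩
      have := hord g h hg1 (lt_of_le_of_lt hgj hjh) hcard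
      rwa [hex] at this
    have hinj : Set.InjOn e (Set.Icc 1 j) := by
      intro a ha b hb hab
      by_contra hne'
      have hjX : j ≤ Fintype.card X := le_trans hj (Nat.sub_le _ _)
      rcases lt_or_gt_of_ne hne' with hlt | hlt
      · have := hord a b ha.1 hlt (le_trans hb.2 hjX)
        rw [hab] at this
        exact hr.1 _ _ this this
      · have := hord b a hb.1 hlt (le_trans ha.2 hjX)
        rw [hab] at this
        exact hr.1 _ _ this this
    have hcnt : j ≤ Set.ncard {b | r b x} := by
      have h1' : (e '' Set.Icc 1 j).ncard = j := by
        rw [Set.ncard_image_of_injOn hinj]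
        rw [← Finset.coe_Icc, Set.ncard_coe_finset, Nat.card_Icc]
        omega
      calc j = (e '' Set.Icc 1 j).ncard := h1'.symm
        _ ≤ Set.ncard {b | r b x} := Set.ncard_le_ncard hsub (Set.toFinite _)
    have := hmem
    simp only [topSet, Set.mem_setOf_eq] at this
    omega
  obtain ⟨i, hiI, hmA⟩ := hrat A hA
  obtain ⟨i', hi'I, hmB⟩ := hrat B hB
  have hBA : c B ∈ A := (Finset.mem_inter.1 hcB).1
  have hAB' : c A ∈ B := (Finset.mem_inter.1 hcA).2
  have hkA : ∀ k ∈ I, c A ∉ topSet r k := key (c A) (fun h h1 h2 => (hout h h1 h2).1) 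
  have hkB : ∀ k ∈ I, c B ∉ topSet r k := key (c B) (fun h h1 h2 => (hout h h1 h2).2)
  have h1 := hmA.2 (c B) hBA (Ne.symm hne)
  have h2 := hmB.2 (c A) hAB' hne
  rcases h1 with ⟨hb, -⟩ | ⟨-, -, hr1⟩
  · exact hkB i hiI hb
  rcases h2 with ⟨hb, -⟩ | ⟨-, -, hr2⟩
  · exact hkA i' hi'I hb
  exact hr.1 _ _ hr1 hr2
end

section
/- Let c be a choice function on a finite nonempty set X, let ▷ be a strict linear order on X with X = {x^▷_1, …, x^▷_{|X|}} enumerated in decreasing ▷-order, and let Harm_c(▷) be a rationalization by self-punishment of c by ▷ with max{ i : ▷_i ∈ Harm_c(▷) } = j for some 0 ≤ j ≤ |X|−1. If A is a menu with c(A) = x^▷_l for some l with j < l ≤ |X|, then A contains no element x^▷_k with j < k < l; that is, A ∩ { y ∈ X : x^▷_j ▷ y and y ▷ x^▷_l } = ∅. -/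
variable {X : Type*}

theorem stmt10 [Fintype X] [DecidableEq X] (c : Finset X → X) (hc : IsChoice c)
    (r : X → X → Prop) (hr : IsSLO r)
    (e : ℕ → X)
    (hsurj : ∀ x : X, ∃ h : ℕ, 1 ≤ h ∧ h ≤ Fintype.card X ∧ e h = x)
    (hord : ∀ h i : ℕ, 1 ≤ h → h < i → i ≤ Fintype.card X → r (e h) (e i))
    (j : ℕ) (hj : j ≤ Fintype.card X - 1)
    (I : Finset ℕ) (hI : RSP c r I) (hjI : j ∈ I) (hmax : ∀ i ∈ I, i ≤ j) :
    ∀ A : Finset X, A.Nonempty → ∀ l : ℕ, j < l → l ≤ Fintype.card X → c A = e l →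
      ∀ k : ℕ, j < k → k < l → e k ∉ A := by
  intro A hA l hjl hl hcA k hjk hkl hek
  obtain ⟨i, hiI, hmem, hmaxOf⟩ := hI.2.2 A hA
  have hij : i ≤ j := hmax i hiI
  have hrkl : r (e k) (e l) := hord k l (by omega) hkl hl
  have hne : e k ≠ e l := by
    intro h
    exact hr.1 _ _ hrkl (h ▸ hrkl)
  have hnt : e k ∉ topSet r i := by
    intro hkt
    have hinj : Set.InjOn e (Finset.Icc 1 (k - 1) : Finset ℕ) := by
      intro a ha b hb hab
      simp only [Finset.coe_Icc, Set.mem_Icc] at ha hb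
      rcases lt_trichotomy a b with h | h | h
      · exact absurd (hab ▸ hord a b ha.1 h (by omega)) (fun hh => hr.1 _ _ hh hh)
      · exact h
      · exact absurd (hab ▸ hord b a hb.1 h (by omega)) (fun hh => hr.1 _ _ hh hh)
    have hsub : (((Finset.Icc 1 (k - 1)).image e : Finset X) : Set X) ⊆ {b | r b (e k)} := by
      intro x hx
      simp only [Finset.coe_image, Set.mem_image, Finset.mem_coe, Finset.mem_Icc] at hx
      obtain ⟨a, ⟨ha1, ha2⟩, rfl⟩ := hx
      exact hord a k ha1 (by omega) (by omega)
    have hcard : ((Finset.Icc 1 (k - 1)).image e).card = k - 1 := by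
      rw [Finset.card_image_of_injOn hinj, Nat.card_Icc]
      omega
    have hle : k - 1 ≤ Set.ncard {b | r b (e k)} := by
      calc k - 1 = (((Finset.Icc 1 (k - 1)).image e : Finset X) : Set X).ncard := by
            rw [Set.ncard_coe_finset, hcard]
        _ ≤ _ := Set.ncard_le_ncard hsub (Set.toFinite _)
    have : Set.ncard {b | r b (e k)} < i := hkt
    omega
  have hharm := hmaxOf (e k) hek (by rw [hcA]; exact hne)
  rw [hcA] at hharm
  rcases hharm with ⟨hkt, _⟩ | ⟨_, _, hrl⟩
  · exact hnt hkt
  · exact hr.1 _ _ hrkl hrl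
end

section
/- Let c be a choice function on a finite nonempty set X, let ▷ be a strict linear order on X with X = {x^▷_1, …, x^▷_{|X|}} enumerated in decreasing ▷-order, and let Harm_c(▷) be a rationalization by self-punishment of c by ▷ with max{ i : ▷_i ∈ Harm_c(▷) } = j for some 0 ≤ j ≤ |X|−1. Fix h ∈ {1, …, j}, let C_{x^▷_h} = ⋃ { A : A is a menu with c(A) = x^▷_h }, assume C_{x^▷_h} ∩ { y : x^▷_j ▷ y } is nonempty, and let l ∈ {j+1, …, |X|} be the index with x^▷_l = max( C_{x^▷_h} ∩ { y : x^▷_j ▷ y }, ▷ ). If there is no reversal (A_h, B_h) of c such that either x^▷_h = c(A_h) and y_h = c(B_h), or y_h = c(A_h) and x^▷_h = c(B_h), for some y_h ∈ X \ {x^▷_1, …, x^▷_j}, then for every menu D with x^▷_h, x^▷_m ∈ D and l ≤ m ≤ |X|, one has c(D) ≠ x^▷_m. -/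
variable {X : Type*}

theorem stmt11 [Fintype X] [DecidableEq X] (c : Finset X → X) (hc : IsChoice c)
    (r : X → X → Prop) (hr : IsSLO r)
    (e : ℕ → X)
    (hsurj : ∀ x : X, ∃ h : ℕ, 1 ≤ h ∧ h ≤ Fintype.card X ∧ e h = x)
    (hord : ∀ h i : ℕ, 1 ≤ h → h < i → i ≤ Fintype.card X → r (e h) (e i))
    (j : ℕ) (hj : j ≤ Fintype.card X - 1)
    (I : Finset ℕ) (hI : RSP c r I) (hjI : j ∈ I) (hmax : ∀ i ∈ I, i ≤ j)
    (h : ℕ) (hh1 : 1 ≤ h) (hhj : h ≤ j)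
    (l : ℕ) (hl1 : j < l) (hl2 : l ≤ Fintype.card X)
    -- `e l` is the `r`-maximum of `C_{x_h} ∩ {y : x_j ▷ y}`:
    (hlC : ∃ A : Finset X, A.Nonempty ∧ c A = e h ∧ e l ∈ A)
    (hljr : r (e j) (e l))
    (hlmax : ∀ y : X, (∃ A : Finset X, A.Nonempty ∧ c A = e h ∧ y ∈ A) →
      r (e j) y → y ≠ e l → r (e l) y)
    -- there is no reversal selecting `e h` against some item outside `{x_1,…,x_j}`:
    (hnorev : ¬ ∃ A B : Finset X, IsReversal c A B ∧ ∃ y : X,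
      (∀ g : ℕ, 1 ≤ g → g ≤ j → y ≠ e g) ∧
      ((c A = e h ∧ c B = y) ∨ (c A = y ∧ c B = e h))) :
    ∀ D : Finset X, D.Nonempty → e h ∈ D →
      ∀ m : ℕ, l ≤ m → m ≤ Fintype.card X → e m ∈ D → c D ≠ e m := by
  intro D hD hehD m hlm hmX hemD hcD
  have irr : ∀ a : X, ¬ r a a := fun a ha => hr.1 a a ha ha
  have hjcard : j ≤ Fintype.card X := le_trans hj (Nat.sub_le _ _)
  have hinj : ∀ g g' : ℕ, 1 ≤ g → g < g' → g' ≤ Fintype.card X → e g ≠ e g' := by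
    intro g g' h1 h2 h3 heq
    have := hord g g' h1 h2 h3
    rw [heq] at this
    exact irr _ this
  have hehl : e h ≠ e l := hinj h l hh1 (lt_of_le_of_lt hhj hl1) hl2
  have hehm : e h ≠ e m :=
    hinj h m hh1 (lt_of_le_of_lt hhj (lt_of_lt_of_le hl1 hlm)) hmX
  set G : Finset X := {e h, e l, e m} with hGdef
  have hehG : e h ∈ G := by simp [hGdef]
  have helG : e l ∈ G := by simp [hGdef]
  have hemG : e m ∈ G := by simp [hGdef]
  have hGne : G.Nonempty := ⟨e h, hehG⟩
  obtain ⟨i, hiI, hmaxG⟩ := hI.2.2 G hGne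
  have hij : i ≤ j := hmax i hiI
  -- elements strictly below position j are not in the top-i set
  have hnt : ∀ k : ℕ, j < k → k ≤ Fintype.card X → e k ∉ topSet r i := by
    intro k hk1 hk2 hmem
    have hsub : (((Finset.Icc 1 j).image e : Finset X) : Set X) ⊆ {b | r b (e k)} := by
      intro b hb
      simp only [Finset.coe_image, Set.mem_image, Finset.mem_coe, Finset.mem_Icc] at hb
      obtain ⟨g, ⟨hg1, hg2⟩, rfl⟩ := hb
      exact hord g k hg1 (lt_of_le_of_lt hg2 hk1) hk2
    have hinjOn : Set.InjOn e (Finset.Icc 1 j : Finset ℕ) := by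
      intro a ha b hb hab
      simp only [Finset.coe_Icc, Set.mem_Icc] at ha hb
      by_contra hne
      rcases lt_or_gt_of_ne hne with hlt | hlt
      · exact hinj a b ha.1 hlt (le_trans hb.2 hjcard) hab
      · exact hinj b a hb.1 hlt (le_trans ha.2 hjcard) hab.symm
    have hcardS : ((Finset.Icc 1 j).image e).card = j := by
      rw [Finset.card_image_of_injOn hinjOn, Nat.card_Icc]; omega
    have hfin : {b | r b (e k)}.Finite := Set.toFinite _
    have hge : j ≤ Set.ncard {b | r b (e k)} := by
      calc j = ((Finset.Icc 1 j).image e).card := hcardS.symm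
        _ = (((Finset.Icc 1 j).image e : Finset X) : Set X).ncard :=
            (Set.ncard_coe_finset _).symm
        _ ≤ _ := Set.ncard_le_ncard hsub hfin
    have hlt : Set.ncard {b | r b (e k)} < i := hmem
    omega
  by_cases hGl : c G = e l
  · -- reversal between A (choosing e h, containing e l) and G
    obtain ⟨A, hAne, hcA, helA⟩ := hlC
    apply hnorev
    refine ⟨A, G, ⟨hAne, hGne, ?_, ?_, ?_, ?_⟩, e l, ?_, Or.inl ⟨hcA, hGl⟩⟩
    · intro hAG; rw [hAG, hGl] at hcA; exact hehl hcA.symm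
    · rw [hcA, hGl]; exact hehl
    · rw [hcA]; exact Finset.mem_inter.mpr ⟨hcA ▸ hc A hAne, hehG⟩
    · rw [hGl]; exact Finset.mem_inter.mpr ⟨helA, helG⟩
    · intro g hg1 hg2 heq
      exact hinj g l hg1 (lt_of_le_of_lt hg2 hl1) hl2 heq.symm
  · have hcGmem : c G ∈ G := hc G hGne
    have hcases : c G = e h ∨ c G = e l ∨ c G = e m := by
      simpa [hGdef] using hcGmem
    rcases hcases with hGh | hGl' | hGm
    · -- reversal between G and D
      apply hnorev
      refine ⟨G, D, ⟨hGne, hD, ?_, ?_, ?_, ?_⟩, e m, ?_, Or.inl ⟨hGh, hcD⟩⟩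
      · intro hGD; rw [← hGD, hGh] at hcD; exact hehm hcD
      · rw [hGh, hcD]; exact hehm
      · rw [hGh]; exact Finset.mem_inter.mpr ⟨hehG, hehD⟩
      · rw [hcD]; exact Finset.mem_inter.mpr ⟨hemG, hemD⟩
      · intro g hg1 hg2 heq
        exact hinj g m hg1 (lt_of_le_of_lt hg2 (lt_of_lt_of_le hl1 hlm)) hmX heq.symm
    · exact hGl hGl'
    · -- c G = e m ≠ e l: e m must harmful-beat e l, impossible
      have hne : e l ≠ c G := fun hle => hGl hle.symm
      have hbeat : harmful r i (c G) (e l) := hmaxG.2 (e l) helG hne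
      rw [hGm] at hbeat
      have hml : e m ≠ e l := fun hml => hGl (hGm.trans hml)
      have hlltm : l < m := lt_of_le_of_ne hlm (fun hlm' => hml (by rw [hlm']))
      have h1l : 1 ≤ l := le_trans hh1 (le_trans hhj (le_of_lt hl1))
      have hrlm : r (e l) (e m) := hord l m h1l hlltm hmX
      rcases hbeat with ⟨hltop, _⟩ | ⟨_, _, hrml⟩
      · exact hnt l hl1 hl2 hltop
      · exact hr.1 _ _ hrlm hrml
end

section
/- Let c be a choice function on a finite nonempty set X with degree of self-punishment sp(c) = j, and let ▷ be a strict linear order on X such that some rationalization by self-punishment Harm_c(▷) of c by ▷ satisfies max{ i : ▷_i ∈ Harm_c(▷) } = j. Writing X = {x^▷_1, …, x^▷_{|X|}} in decreasing ▷-order, for every h ∈ {1, …, j} there is a reversal (A, B) of c such that either c(A) = x^▷_h and c(B) = y_h, or c(A) = y_h and c(B) = x^▷_h, for some y_h ∈ X \ {x^▷_1, …, x^▷_j}. -/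
variable {X : Type*}

set_option linter.unusedSectionVars false
section Aux
variable {X : Type*} [Fintype X] [DecidableEq X]

/-- A position function: injective into `[1, card X]`. -/
def GoodPos (p : X → ℕ) : Prop :=
  Function.Injective p ∧ ∀ x, 1 ≤ p x ∧ p x ≤ Fintype.card X

lemma GoodPos.surj {p : X → ℕ} (hp : GoodPos p) {m : ℕ} (h1 : 1 ≤ m)
    (h2 : m ≤ Fintype.card X) : ∃ b, p b = m := by
  classical
  have himg : Finset.image p Finset.univ = Finset.Icc 1 (Fintype.card X) := by
    apply Finset.eq_of_subset_of_card_le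
    · intro k hk
      simp only [Finset.mem_image, Finset.mem_univ, true_and] at hk
      obtain ⟨b, rfl⟩ := hk
      exact Finset.mem_Icc.2 ⟨(hp.2 b).1, (hp.2 b).2⟩
    · rw [Nat.card_Icc, Finset.card_image_of_injective _ hp.1, Finset.card_univ]
      omega
  have : m ∈ Finset.image p Finset.univ := by
    rw [himg]; exact Finset.mem_Icc.2 ⟨h1, h2⟩
  simpa using this

lemma mem_topSet_ord {p : X → ℕ} (hp : GoodPos p) (i : ℕ) (a : X) :
    a ∈ topSet (fun x y : X => p x < p y) i ↔ p a ≤ i := by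
  classical
  have hcard : Set.ncard {b : X | p b < p a} = p a - 1 := by
    have h1 : {b : X | p b < p a} = ↑(Finset.univ.filter fun b => p b < p a) := by
      ext b; simp
    rw [h1, Set.ncard_coe_finset, ← Nat.card_Ico 1 (p a)]
    apply Finset.card_bij (fun b _ => p b)
    · intro b hb
      simp only [Finset.mem_filter, Finset.mem_univ, true_and] at hb
      exact Finset.mem_Ico.2 ⟨(hp.2 b).1, hb⟩
    · intro b1 _ b2 _ hpe
      exact hp.1 hpe
    · intro m hm
      rw [Finset.mem_Ico] at hm
      obtain ⟨b, hb⟩ := hp.surj hm.1 (le_trans (le_of_lt hm.2) (hp.2 a).2)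
      exact ⟨b, by simp [hb, hm.2], hb⟩
  show Set.ncard {b : X | p b < p a} < i ↔ p a ≤ i
  rw [hcard]
  have := (hp.2 a).1
  omega

lemma isSLO_ord {p : X → ℕ} (hp : GoodPos p) : IsSLO (fun x y : X => p x < p y) := by
  refine ⟨fun a b hab => by omega, fun a b d hab hbd => by omega, fun a b hab => ?_⟩
  have : p a ≠ p b := fun hEq => hab (hp.1 hEq)
  omega

lemma isMaxOf_ord {p : X → ℕ} (hp : GoodPos p) (i : ℕ) (A : Finset X) (x : X) :
    IsMaxOf (harmful (fun a b : X => p a < p b) i) A x ↔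
      x ∈ A ∧ ∀ y ∈ A, y ≠ x →
        ((p y ≤ i ∧ (p x ≤ i → p y < p x)) ∨ (i < p x ∧ i < p y ∧ p x < p y)) := by
  unfold IsMaxOf harmful
  refine and_congr_right fun _ => ?_
  refine forall_congr' fun y => forall_congr' fun _ => forall_congr' fun _ => ?_
  rw [mem_topSet_ord hp, mem_topSet_ord hp]
  constructor
  · rintro (⟨h1, h2⟩ | ⟨h1, h2, h3⟩)
    · exact Or.inl ⟨h1, h2⟩
    · exact Or.inr ⟨by omega, by omega, h3⟩
  · rintro (⟨h1, h2⟩ | ⟨h1, h2, h3⟩)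
    · exact Or.inl ⟨h1, h2⟩
    · exact Or.inr ⟨by omega, by omega, h3⟩

end Aux
theorem stmt12 [Fintype X] [DecidableEq X] (c : Finset X → X) (hc : IsChoice c)
    (j : ℕ) (hsp : sp c = j)
    (r : X → X → Prop) (hr : IsSLO r)
    (e : ℕ → X)
    (hsurj : ∀ x : X, ∃ h : ℕ, 1 ≤ h ∧ h ≤ Fintype.card X ∧ e h = x)
    (hord : ∀ h i : ℕ, 1 ≤ h → h < i → i ≤ Fintype.card X → r (e h) (e i))
    (I : Finset ℕ) (hI : RSP c r I) (hjI : j ∈ I) (hmax : ∀ i ∈ I, i ≤ j) :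
    ∀ h : ℕ, 1 ≤ h → h ≤ j →
      ∃ A B : Finset X, ∃ y : X, IsReversal c A B ∧
        (∀ g : ℕ, 1 ≤ g → g ≤ j → y ≠ e g) ∧
        ((c A = e h ∧ c B = y) ∨ (c A = y ∧ c B = e h)) := by
  classical
  intro h h1 hhj
  by_contra hcon
  set n := Fintype.card X with hn
  have hj1 : 1 ≤ j := le_trans h1 hhj
  have hjn : j ≤ n - 1 := hI.2.1 j hjI
  have hn2 : 2 ≤ n := by omega
  have hasym := hr.1
  have einj : ∀ a b : ℕ, 1 ≤ a → a ≤ n → 1 ≤ b → b ≤ n → e a = e b → a = b := by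
    intro a b ha1 ha2 hb1 hb2 hab
    by_contra hne
    rcases Nat.lt_or_ge a b with hlt | hge
    · have h2 := hord a b ha1 hlt hb2
      rw [hab] at h2
      exact hasym _ _ h2 h2
    · have hlt : b < a := by omega
      have h2 := hord b a hb1 hlt ha2
      rw [hab] at h2
      exact hasym _ _ h2 h2
  choose pos hpos1 hpos2 hpos3 using hsurj
  have pos_e : ∀ g : ℕ, 1 ≤ g → g ≤ n → pos (e g) = g := fun g hg1 hg2 =>
    einj _ _ (hpos1 _) (hpos2 _) hg1 hg2 (hpos3 _)
  have posinj : ∀ x y : X, pos x = pos y → x = y := by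
    intro x y hxy
    have hx := hpos3 x
    have hy := hpos3 y
    rw [← hx, ← hy, hxy]
  have gp : GoodPos pos := ⟨fun x y hxy => posinj x y hxy, fun x => ⟨hpos1 x, hpos2 x⟩⟩
  have hre : r = fun x y : X => pos x < pos y := by
    funext x y
    apply propext
    constructor
    · intro hrxy
      by_contra hle
      push_neg at hle
      rcases Nat.lt_or_ge (pos y) (pos x) with hlt | hge
      · have h2 := hord (pos y) (pos x) (hpos1 y) hlt (hpos2 x)
        rw [hpos3, hpos3] at h2
        exact hasym _ _ hrxy h2
      · have hxy : x = y := posinj x y (by omega)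
        subst hxy
        exact hasym _ _ hrxy hrxy
    · intro hlt
      have h2 := hord (pos x) (pos y) (hpos1 x) hlt (hpos2 y)
      rwa [hpos3, hpos3] at h2
  have hRSP := hI.2.2
  rw [hre] at hRSP
  have hposeh : pos (e h) = h := pos_e h h1 (by omega)
  have tail_of : ∀ y : X, j < pos y → ∀ g : ℕ, 1 ≤ g → g ≤ j → y ≠ e g := by
    intro y hy g hg1 hg2 hEq
    rw [hEq, pos_e g hg1 (by omega)] at hy
    omega
  have noRev : ∀ y : X, j < pos y → (∃ A : Finset X, c A = e h ∧ y ∈ A) →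
      (∃ B : Finset X, e h ∈ B ∧ c B = y) → False := by
    rintro y hy ⟨A, hAc, hyA⟩ ⟨B, hBh, hBc⟩
    apply hcon
    have hyne : e h ≠ y := by
      intro hEq
      rw [← hEq, hposeh] at hy
      omega
    refine ⟨A, B, y, ⟨⟨y, hyA⟩, ⟨e h, hBh⟩, ?_, ?_, ?_, ?_⟩, tail_of y hy, Or.inl ⟨hAc, hBc⟩⟩
    · intro hAB
      rw [hAB] at hAc
      exact hyne (hAc.symm.trans hBc)
    · rw [hAc, hBc]; exact hyne
    · rw [Finset.mem_inter]
      exact ⟨hc A ⟨y, hyA⟩, by rw [hAc]; exact hBh⟩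
    · rw [Finset.mem_inter]
      exact ⟨by rw [hBc]; exact hyA, hc B ⟨e h, hBh⟩⟩
  set S2s : Finset X :=
    Finset.univ.filter (fun x => j < pos x ∧ ∃ B : Finset X, e h ∈ B ∧ c B = x) with hS2s
  set pstar : ℕ := max j (S2s.sup pos) with hpstar
  have hjp : j ≤ pstar := le_max_left _ _
  have hS2le : ∀ x : X, j < pos x → (∃ B : Finset X, e h ∈ B ∧ c B = x) → pos x ≤ pstar := by
    intro x hx1 hx2
    exact le_trans (Finset.le_sup (Finset.mem_filter.2 ⟨Finset.mem_univ x, hx1, hx2⟩))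
      (le_max_right _ _)
  have hpn : pstar ≤ n := by
    apply max_le (by omega)
    exact Finset.sup_le fun x _ => hpos2 x
  have hF1 : ∀ y : X, j < pos y → (∃ A : Finset X, c A = e h ∧ y ∈ A) → pstar < pos y := by
    intro y hy hA
    apply max_lt hy
    have hbot : (⊥ : ℕ) < pos y := by
      have h0 := hpos1 y
      simp only [bot_eq_zero']
      omega
    rw [Finset.sup_lt_iff hbot]
    intro s2 hs2
    rw [Finset.mem_filter] at hs2
    obtain ⟨-, hs2j, B, hBh, hBc⟩ := hs2
    by_contra hle
    push_neg at hle
    rcases Nat.eq_or_lt_of_le hle with hEq | hlt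
    · exact noRev y hy hA ⟨B, hBh, by rw [hBc]; exact posinj s2 y hEq.symm⟩
    · -- menu C = {e h, y, s2}
      set C : Finset X := insert (e h) {y, s2} with hC
      obtain ⟨i, hiI, hM⟩ := hRSP C ⟨e h, by simp [hC]⟩
      have hij : i ≤ j := hmax i hiI
      rw [isMaxOf_ord gp] at hM
      obtain ⟨hcC, hbeats⟩ := hM
      have hcCmem : c C ∈ C := hcC
      simp only [hC, Finset.mem_insert, Finset.mem_singleton] at hcCmem
      rcases hcCmem with hceq | hceq | hceq
      · exact noRev s2 hs2j ⟨C, hceq, by simp [hC]⟩ ⟨B, hBh, hBc⟩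
      · exact noRev y hy hA ⟨C, by simp [hC], hceq⟩
      · have hyC : y ∈ C := by simp [hC]
        have hys : y ≠ c C := by
          rw [hceq]
          intro hEq
          rw [hEq] at hlt
          omega
        have hb := hbeats y hyC hys
        rw [hceq] at hb
        omega
  -- the modified position function
  set p' : X → ℕ := fun x => if x = e h then pstar else
      (if pos x < h then pos x else (if pos x ≤ pstar then pos x - 1 else pos x)) with hp'def
  have hp'eh : p' (e h) = pstar := by simp [hp'def]
  have hposne : ∀ z : X, z ≠ e h → pos z ≠ h := by
    intro z hz hEq
    have h2 := hpos3 z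
    rw [hEq] at h2
    exact hz h2.symm
  have hp'spec : ∀ z : X, z ≠ e h →
      (pos z ≠ h ∧ ((pos z < h ∧ p' z = pos z) ∨
        (h < pos z ∧ pos z ≤ pstar ∧ p' z = pos z - 1) ∨
        (pstar < pos z ∧ p' z = pos z))) := by
    intro z hz
    refine ⟨hposne z hz, ?_⟩
    have hzh := hposne z hz
    simp only [hp'def, if_neg hz]
    by_cases h1' : pos z < h
    · exact Or.inl ⟨h1', by rw [if_pos h1']⟩
    · by_cases h2' : pos z ≤ pstar
      · exact Or.inr (Or.inl ⟨by omega, h2', by rw [if_neg h1', if_pos h2']⟩)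
      · exact Or.inr (Or.inr ⟨by omega, by rw [if_neg h1', if_neg h2']⟩)
  have hhp : h ≤ pstar := le_trans hhj hjp
  have gp' : GoodPos p' := by
    constructor
    · intro a b hab
      rcases eq_or_ne a (e h) with ha | ha <;> rcases eq_or_ne b (e h) with hb | hb
      · rw [ha, hb]
      · exfalso
        obtain ⟨hbh, hbr⟩ := hp'spec b hb
        rw [ha, hp'eh] at hab
        have hb1 := hpos1 b
        omega
      · exfalso
        obtain ⟨hah, har⟩ := hp'spec a ha
        rw [hb, hp'eh] at hab
        have ha1 := hpos1 a
        omega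
      · obtain ⟨hah, har⟩ := hp'spec a ha
        obtain ⟨hbh, hbr⟩ := hp'spec b hb
        have ha1 := hpos1 a
        have hb1 := hpos1 b
        exact posinj a b (by omega)
    · intro x
      rcases eq_or_ne x (e h) with hx | hx
      · rw [hx, hp'eh]
        omega
      · obtain ⟨hxh, hxr⟩ := hp'spec x hx
        have ha1 := hpos1 x
        have ha2 := hpos2 x
        omega
  -- build a rationalization with max index j - 1
  have hspset : (j - 1) ∈ { m : ℕ | ∃ r : X → X → Prop, IsSLO r ∧ ∃ I : Finset ℕ,
      RSP c r I ∧ m ∈ I ∧ ∀ i ∈ I, i ≤ m } := by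
    refine ⟨fun a b => p' a < p' b, isSLO_ord gp', Finset.range j,
      ⟨⟨0, Finset.mem_range.2 (by omega)⟩, ?_, ?_⟩,
      Finset.mem_range.2 (by omega), ?_⟩
    · intro i hi
      rw [Finset.mem_range] at hi
      omega
    · -- main rationalization check
      intro A hA
      obtain ⟨i, hiI, hM⟩ := hRSP A hA
      have hij : i ≤ j := hmax i hiI
      rw [isMaxOf_ord gp] at hM
      obtain ⟨hxA, hbeats⟩ := hM
      suffices hsuff : ∃ i' : ℕ, i' < j ∧ ∀ y ∈ A, y ≠ c A →
          ((p' y ≤ i' ∧ (p' (c A) ≤ i' → p' y < p' (c A))) ∨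
            (i' < p' (c A) ∧ i' < p' y ∧ p' (c A) < p' y)) by
        obtain ⟨i', hi', hb'⟩ := hsuff
        exact ⟨i', Finset.mem_range.2 hi', (isMaxOf_ord gp' i' A (c A)).2 ⟨hxA, hb'⟩⟩
      rcases eq_or_ne (c A) (e h) with hxeh | hxeh
      · -- Case C1 : c A = e h ; use i' = j - 1
        refine ⟨j - 1, by omega, ?_⟩
        intro y hyA hyx
        have hyeh : y ≠ e h := fun hEq => hyx (hEq.trans hxeh.symm)
        obtain ⟨hyh, hyr⟩ := hp'spec y hyeh
        have hy1 := hpos1 y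
        have hkey : pos y ≤ j ∨ pstar < pos y := by
          rcases le_or_gt (pos y) j with h' | h'
          · exact Or.inl h'
          · exact Or.inr (hF1 y h' ⟨A, hxeh, hyA⟩)
        rw [hxeh, hp'eh]
        omega
      · obtain ⟨hxh, hxr⟩ := hp'spec (c A) hxeh
        have hx1 := hpos1 (c A)
        have hx2 := hpos2 (c A)
        rcases le_or_gt (pos (c A)) i with hqi | hqi
        · -- R-case : reversed-block choice, pos (c A) ≤ i
          have hRfact : ∀ y ∈ A, y ≠ c A → pos y ≤ i ∧ pos y < pos (c A) := by
            intro y hyA hyx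
            have hb := hbeats y hyA hyx
            omega
          by_cases hehA : e h ∈ A
          · -- e h ∈ A : so h < pos (c A) ; use i' = pos (c A) - 2
            have hhi : h < pos (c A) := by
              have hb := hRfact (e h) hehA (Ne.symm hxeh)
              rw [hposeh] at hb
              omega
            refine ⟨pos (c A) - 2, by omega, ?_⟩
            intro y hyA hyx
            rcases eq_or_ne y (e h) with hyeh | hyeh
            · rw [hyeh, hp'eh]
              omega
            · obtain ⟨hyh, hyr⟩ := hp'spec y hyeh
              have hy1 := hpos1 y
              have hb := hRfact y hyA hyx
              omega
          · -- e h ∉ A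
            by_cases hle : h ≤ i
            · refine ⟨i - 1, by omega, ?_⟩
              intro y hyA hyx
              have hyeh : y ≠ e h := ne_of_mem_of_not_mem hyA hehA
              obtain ⟨hyh, hyr⟩ := hp'spec y hyeh
              have hy1 := hpos1 y
              have hb := hRfact y hyA hyx
              omega
            · refine ⟨i, by omega, ?_⟩
              intro y hyA hyx
              have hyeh : y ≠ e h := ne_of_mem_of_not_mem hyA hehA
              obtain ⟨hyh, hyr⟩ := hp'spec y hyeh
              have hy1 := hpos1 y
              have hb := hRfact y hyA hyx
              omega
        · -- N-case : normal choice, i < pos (c A)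
          have hNfact : ∀ y ∈ A, y ≠ c A → pos y ≤ i ∨ pos (c A) < pos y := by
            intro y hyA hyx
            have hb := hbeats y hyA hyx
            omega
          by_cases hehA : e h ∈ A
          · have hh' : h ≤ i ∨ pos (c A) < h := by
              have hb := hNfact (e h) hehA (Ne.symm hxeh)
              rw [hposeh] at hb
              omega
            rcases hh' with hhi | hhq
            · -- h ≤ i < pos (c A)
              rcases le_or_gt (pos (c A)) j with hqj | hqj
              · -- top choice : i' = pos (c A) - 2
                refine ⟨pos (c A) - 2, by omega, ?_⟩
                intro y hyA hyx
                rcases eq_or_ne y (e h) with hyeh | hyeh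
                · rw [hyeh, hp'eh]
                  omega
                · obtain ⟨hyh, hyr⟩ := hp'spec y hyeh
                  have hy1 := hpos1 y
                  have hb := hNfact y hyA hyx
                  omega
              · -- tail choice with e h ∈ A : c A is an S2 element
                have hS2x : pos (c A) ≤ pstar := hS2le (c A) hqj ⟨A, hehA, rfl⟩
                refine ⟨i - 1, by omega, ?_⟩
                intro y hyA hyx
                rcases eq_or_ne y (e h) with hyeh | hyeh
                · rw [hyeh, hp'eh]
                  omega
                · obtain ⟨hyh, hyr⟩ := hp'spec y hyeh
                  have hy1 := hpos1 y
                  have hb := hNfact y hyA hyx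
                  omega
            · -- pos (c A) < h : use i' = i
              refine ⟨i, by omega, ?_⟩
              intro y hyA hyx
              rcases eq_or_ne y (e h) with hyeh | hyeh
              · rw [hyeh, hp'eh]
                omega
              · obtain ⟨hyh, hyr⟩ := hp'spec y hyeh
                have hy1 := hpos1 y
                have hb := hNfact y hyA hyx
                omega
          · -- e h ∉ A
            by_cases hle : h ≤ i
            · refine ⟨i - 1, by omega, ?_⟩
              intro y hyA hyx
              have hyeh : y ≠ e h := ne_of_mem_of_not_mem hyA hehA
              obtain ⟨hyh, hyr⟩ := hp'spec y hyeh
              have hy1 := hpos1 y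
              have hb := hNfact y hyA hyx
              omega
            · refine ⟨i, by omega, ?_⟩
              intro y hyA hyx
              have hyeh : y ≠ e h := ne_of_mem_of_not_mem hyA hehA
              obtain ⟨hyh, hyr⟩ := hp'spec y hyeh
              have hy1 := hpos1 y
              have hb := hNfact y hyA hyx
              omega
    · intro i hi
      rw [Finset.mem_range] at hi
      omega
  have hle : sp c ≤ j - 1 := Nat.sInf_le hspset
  rw [hsp] at hle
  omega
end

section
/- Let c be a choice function on a finite nonempty set X with sp(c) = j for some 1 ≤ j ≤ |X|−1. Then there are at least j! pairwise distinct strict linear orders ▷ on X such that the family {▷_0, ▷_1, …, ▷_j} of harmful distortions of ▷ of index at most j is a rationalization by self-punishment of c by ▷. -/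
variable {X : Type*}

section Aux
variable [Fintype X]

lemma aux_surj (ρ : X → ℕ) (hinj : Function.Injective ρ)
    (hlt : ∀ a, ρ a < Fintype.card X) : ∀ k < Fintype.card X, ∃ a, ρ a = k := by
  intro k hk
  have hb : Function.Bijective (fun a => (⟨ρ a, hlt a⟩ : Fin (Fintype.card X))) := by
    rw [Fintype.bijective_iff_injective_and_card]
    exact ⟨fun a b hab => hinj (by simpa using congrArg Fin.val hab), by simp⟩
  obtain ⟨a, ha⟩ := hb.2 ⟨k, hk⟩
  exact ⟨a, congrArg Fin.val ha⟩

lemma aux_count (ρ : X → ℕ) (hinj : Function.Injective ρ)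
    (hlt : ∀ a, ρ a < Fintype.card X) (a : X) :
    Set.ncard {b | ρ b < ρ a} = ρ a := by
  have himg : ρ '' {b | ρ b < ρ a} = Set.Iio (ρ a) := by
    ext k
    constructor
    · rintro ⟨b, hb, rfl⟩; exact hb
    · intro hk
      obtain ⟨b, rfl⟩ := aux_surj ρ hinj hlt k (lt_trans hk (hlt a))
      exact ⟨b, hk, rfl⟩
  have h2 := Set.ncard_image_of_injective {b | ρ b < ρ a} hinj
  rw [himg] at h2
  rw [← h2, ← Finset.coe_range, Set.ncard_coe_finset, Finset.card_range]

lemma aux_top (ρ : X → ℕ) (hinj : Function.Injective ρ)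
    (hlt : ∀ a, ρ a < Fintype.card X) (i : ℕ) (a : X) :
    a ∈ topSet (fun x y => ρ x < ρ y) i ↔ ρ a < i := by
  unfold topSet
  simp only [Set.mem_setOf_eq, aux_count ρ hinj hlt a]

omit [Fintype X] in
lemma aux_slo (ρ : X → ℕ) (hinj : Function.Injective ρ) :
    IsSLO (fun x y : X => ρ x < ρ y) :=
  ⟨fun _ _ h => not_lt.2 h.le, fun _ _ _ h1 h2 => lt_trans h1 h2,
    fun a b hab => (fun h : ρ a ≠ ρ b => h.lt_or_gt) (fun he => hab (hinj he))⟩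

lemma rank_mono (r : X → X → Prop) (hr : IsSLO r) {a b : X} (hab : r a b) :
    Set.ncard {c | r c a} < Set.ncard {c | r c b} := by
  apply Set.ncard_lt_ncard _ (Set.toFinite _)
  constructor
  · intro x hx
    exact hr.2.1 x a b hx hab
  · intro hsub
    exact hr.1 a a (hsub hab) (hsub hab)

lemma rank_lt (r : X → X → Prop) (hr : IsSLO r) (a : X) :
    Set.ncard {b | r b a} < Fintype.card X := by
  have h : {b | r b a} ⊂ Set.univ := by
    rw [Set.ssubset_univ_iff]
    intro h
    have : a ∈ {b | r b a} := h ▸ Set.mem_univ a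
    exact hr.1 a a this this
  have := Set.ncard_lt_ncard h Set.finite_univ
  rwa [Set.ncard_univ, Nat.card_eq_fintype_card] at this

lemma rank_iff (r : X → X → Prop) (hr : IsSLO r) (a b : X) :
    r a b ↔ Set.ncard {x | r x a} < Set.ncard {x | r x b} := by
  constructor
  · exact rank_mono r hr
  · intro h
    rcases eq_or_ne a b with rfl | hne
    · exact absurd h (lt_irrefl _)
    rcases hr.2.2 a b hne with h1 | h1
    · exact h1
    · exact absurd h (not_lt.2 (rank_mono r hr h1).le)

lemma perm_id {m : ℕ} (τ : Equiv.Perm (Fin m)) (hτ : StrictMono ⇑τ) (u : Fin m) : τ u = u := by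
  have key : ∀ (σ : Equiv.Perm (Fin m)), StrictMono ⇑σ → ∀ v : Fin m, (v : ℕ) ≤ σ v := by
    intro σ hσ
    have : ∀ k, ∀ v : Fin m, (v : ℕ) = k → k ≤ (σ v : ℕ) := by
      intro k
      induction k with
      | zero => intro v _; exact Nat.zero_le _
      | succ k ih =>
        intro v hv
        have hvm := v.isLt
        have hkm : k < m := by omega
        have h1 : (⟨k, hkm⟩ : Fin m) < v := by
          rw [Fin.lt_def]; simp; omega
        have h2 := Fin.lt_def.mp (hσ h1)
        have h3 := ih ⟨k, hkm⟩ rfl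
        omega
    exact fun v => this (v : ℕ) v rfl
  have hsymm : StrictMono ⇑τ.symm := by
    intro x y hxy
    rcases lt_trichotomy (τ.symm x) (τ.symm y) with h | h | h
    · exact h
    · exact absurd (τ.symm.injective h) hxy.ne
    · exact absurd (by simpa using hτ h) (not_lt.2 hxy.le)
  have h1 := key τ hτ u
  have h2 := key τ.symm hsymm (τ u)
  rw [Equiv.symm_apply_apply] at h2
  exact Fin.val_injective (le_antisymm h2 h1)

end Aux

theorem stmt15 [Fintype X] [DecidableEq X] (c : Finset X → X) (hc : IsChoice c)
    (j : ℕ) (hj1 : 1 ≤ j) (hj2 : j ≤ Fintype.card X - 1) (hsp : sp c = j) :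
    ∃ f : Fin (Nat.factorial j) → (X → X → Prop), Function.Injective f ∧
      ∀ k : Fin (Nat.factorial j), IsSLO (f k) ∧
        ∀ A : Finset X, A.Nonempty → ∃ i : ℕ, i ≤ j ∧ IsMaxOf (harmful (f k) i) A (c A) := by
  unfold sp at hsp
  -- basic numerics
  have hjn : j < Fintype.card X := by omega
  -- extract a witness from sp c = j
  obtain ⟨r, hr, I, hRSP, hjI, hIle⟩ : ∃ r : X → X → Prop, IsSLO r ∧ ∃ I : Finset ℕ,
      RSP c r I ∧ j ∈ I ∧ ∀ i ∈ I, i ≤ j := by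
    have hne : { m : ℕ | ∃ r : X → X → Prop, IsSLO r ∧ ∃ I : Finset ℕ,
        RSP c r I ∧ m ∈ I ∧ ∀ i ∈ I, i ≤ m }.Nonempty := by
      by_contra h
      rw [Set.not_nonempty_iff_eq_empty] at h
      rw [h, Nat.sInf_empty] at hsp
      omega
    have := Nat.sInf_mem hne
    rw [hsp] at this
    exact this
  -- the rank function of r
  set rk : X → ℕ := fun a => Set.ncard {b | r b a} with hrk_def
  have hrk_lt : ∀ a, rk a < Fintype.card X := rank_lt r hr
  have hrk_iff : ∀ a b, r a b ↔ rk a < rk b := rank_iff r hr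
  have hrk_inj : Function.Injective rk := by
    intro a b hab
    by_contra hne
    rcases hr.2.2 a b hne with h | h
    · have := (hrk_iff a b).1 h; omega
    · have := (hrk_iff b a).1 h; omega
  -- the indexing of permutations
  have hcard : Fintype.card (Equiv.Perm (Fin j)) = Nat.factorial j := by
    simp [Fintype.card_perm]
  set E : Fin (Nat.factorial j) ≃ Equiv.Perm (Fin j) := (Fintype.equivFinOfCardEq hcard).symm
    with hE
  -- permuted rank functions
  set p : Equiv.Perm (Fin j) → ℕ → ℕ :=
    fun σ m => if h : m < j then (σ ⟨m, h⟩ : ℕ) else m with hp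
  have hp_lt_iff : ∀ σ m, p σ m < j ↔ m < j := by
    intro σ m
    by_cases h : m < j
    · simp [hp, h, Fin.is_lt]
    · simp [hp, h]
  have hp_inj : ∀ σ, Function.Injective (p σ) := by
    intro σ m m' hmm'
    by_cases h : m < j <;> by_cases h' : m' < j
    · simp only [hp, dif_pos h, dif_pos h'] at hmm'
      have := σ.injective (Fin.val_injective hmm')
      simpa using congrArg Fin.val this
    · rw [hp] at hmm'; simp only [dif_pos h, dif_neg h'] at hmm'
      have := (σ ⟨m, h⟩).isLt
      omega
    · rw [hp] at hmm'; simp only [dif_neg h, dif_pos h'] at hmm'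
      have := (σ ⟨m', h'⟩).isLt
      omega
    · simpa [hp, dif_neg h, dif_neg h'] using hmm'
  have hp_id : ∀ σ m, ¬ m < j → p σ m = m := by
    intro σ m h; simp [hp, h]
  have hp_pos : ∀ σ m (h : m < j), p σ m = (σ ⟨m, h⟩ : ℕ) := by
    intro σ m h; simp [hp, h]
  set ρ : Equiv.Perm (Fin j) → X → ℕ := fun σ a => p σ (rk a) with hρ
  have hρ_inj : ∀ σ, Function.Injective (ρ σ) := fun σ => (hp_inj σ).comp hrk_inj
  have hρ_lt : ∀ σ a, ρ σ a < Fintype.card X := by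
    intro σ a
    by_cases h : rk a < j
    · rw [hρ]; simp only []
      rw [hp_pos σ _ h]
      exact lt_trans (σ ⟨rk a, h⟩).isLt hjn
    · rw [hρ]; simp only []
      rw [hp_id σ _ h]
      exact hrk_lt a
  -- the key consequence of the original rationalization
  have hK : ∀ A : Finset X, A.Nonempty → ∀ y ∈ A, ¬ rk y < j → y ≠ c A → r (c A) y := by
    intro A hA y hyA hyT hya
    obtain ⟨i₀, hi₀I, hmax⟩ := hRSP.2.2 A hA
    rcases hmax.2 y hyA hya with ⟨hytop, _⟩ | ⟨_, _, hry⟩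
    · have : rk y < i₀ := hytop
      have := hIle i₀ hi₀I
      omega
    · exact hry
  refine ⟨fun k => fun a b => ρ (E k) a < ρ (E k) b, ?_, ?_⟩
  · -- injectivity
    intro k k' hkk'
    set σ := E k with hσ
    set σ' := E k' with hσ'
    have hrel : ∀ u v : Fin j, (σ u < σ v ↔ σ' u < σ' v) := by
      intro u v
      obtain ⟨a, ha⟩ := aux_surj rk hrk_inj hrk_lt (u : ℕ) (lt_trans u.isLt hjn)
      obtain ⟨b, hb⟩ := aux_surj rk hrk_inj hrk_lt (v : ℕ) (lt_trans v.isLt hjn)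
      have h1 : ∀ τ : Equiv.Perm (Fin j), ρ τ a = (τ u : ℕ) := by
        intro τ
        rw [hρ]; simp only []
        rw [ha, hp_pos τ _ u.isLt]
      have h2 : ∀ τ : Equiv.Perm (Fin j), ρ τ b = (τ v : ℕ) := by
        intro τ
        rw [hρ]; simp only []
        rw [hb, hp_pos τ _ v.isLt]
      have := congrFun (congrFun hkk' a) b
      rw [Fin.lt_def, Fin.lt_def, ← h1 σ, ← h2 σ, ← h1 σ', ← h2 σ']
      exact iff_of_eq this
    have hmono : StrictMono ⇑(σ'.symm.trans σ) := by
      intro x y hxy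
      have hx : σ' (σ'.symm x) < σ' (σ'.symm y) := by simpa using hxy
      have := (hrel (σ'.symm x) (σ'.symm y)).2 hx
      simpa [Equiv.trans_apply] using this
    have hid := perm_id (σ'.symm.trans σ) hmono
    have hσeq : σ = σ' := by
      ext u
      have := hid (σ' u)
      simpa [Equiv.trans_apply] using congrArg Fin.val this
    have : E k = E k' := by rw [← hσ, ← hσ', hσeq]
    exact E.injective this
  · -- each permuted order works
    intro k
    set σ := E k with hσ
    refine ⟨aux_slo (ρ σ) (hρ_inj σ), ?_⟩
    intro A hA
    have haA : c A ∈ A := hc A hA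
    by_cases hT : rk (c A) < j
    · -- c A is among the top j: punish everything above it
      refine ⟨(σ ⟨rk (c A), hT⟩ : ℕ), (σ ⟨rk (c A), hT⟩).isLt.le, haA, ?_⟩
      have hia : ρ σ (c A) = (σ ⟨rk (c A), hT⟩ : ℕ) := hp_pos σ _ hT
      intro y hyA hya
      have hne : ρ σ y ≠ ρ σ (c A) := fun h => hya (hρ_inj σ h)
      have hnotTop : c A ∉ topSet (fun x y => ρ σ x < ρ σ y) ((σ ⟨rk (c A), hT⟩ : ℕ)) := by
        rw [aux_top (ρ σ) (hρ_inj σ) (hρ_lt σ)]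
        omega
      rcases hne.lt_or_gt with h | h
      · left
        refine ⟨?_, fun hcc => absurd hcc hnotTop⟩
        rw [aux_top (ρ σ) (hρ_inj σ) (hρ_lt σ)]
        omega
      · right
        refine ⟨hnotTop, ?_, h⟩
        rw [aux_top (ρ σ) (hρ_inj σ) (hρ_lt σ)]
        omega
    · -- c A is outside the top j: use index j
      refine ⟨j, le_refl j, haA, ?_⟩
      have hmemtop : ∀ z, z ∈ topSet (fun x y => ρ σ x < ρ σ y) j ↔ rk z < j := by
        intro z
        rw [aux_top (ρ σ) (hρ_inj σ) (hρ_lt σ)]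
        exact hp_lt_iff σ (rk z)
      intro y hyA hya
      by_cases hyT : rk y < j
      · left
        exact ⟨(hmemtop y).2 hyT, fun hcc => absurd ((hmemtop (c A)).1 hcc) hT⟩
      · right
        refine ⟨fun hcc => absurd ((hmemtop (c A)).1 hcc) hT,
          fun hcc => absurd ((hmemtop y).1 hcc) hyT, ?_⟩
        have hray : r (c A) y := hK A hA y hyA hyT hya
        have : rk (c A) < rk y := (hrk_iff _ _).1 hray
        rw [hρ]; simp only []
        rw [hp_id σ _ hT, hp_id σ _ hyT]
        exact this
end

section
/- Let c be a choice function on a finite nonempty set X with |X| ≥ 2. Then c is strongly harmful (i.e., sp(c) = |X|−1) if and only if c violates WARP under constant nonreciprocal selection of |X|−1 items. -/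
variable {X : Type*}

set_option linter.unusedSectionVars false

section AuxSP
variable {X : Type*} [Fintype X] [DecidableEq X]
variable {X : Type*} [Fintype X] [DecidableEq X]

private lemma aux_irrefl {r : X → X → Prop} (hr : IsSLO r) (x : X) : ¬ r x x :=
  fun h => hr.1 x x h h

private lemma aux_maxof {r : X → X → Prop} (hr : IsSLO r) {A : Finset X} {x : X}
    (hx : x ∈ A) : IsMaxOf (harmful r (Set.ncard {b | r b x})) A x := by
  set i := Set.ncard {b | r b x} with hi
  have hxtop : x ∉ topSet r i := by
    simp only [topSet, Set.mem_setOf_eq, ← hi]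
    exact lt_irrefl i
  refine ⟨hx, fun y hy hyx => ?_⟩
  by_cases hytop : y ∈ topSet r i
  · exact Or.inl ⟨hytop, fun h => absurd h hxtop⟩
  · refine Or.inr ⟨hxtop, hytop, ?_⟩
    rcases hr.2.2 x y (Ne.symm hyx) with h | h
    · exact h
    · exfalso
      have hsub : {b | r b y} ⊆ {b | r b x} := fun z hz => hr.2.1 z y x hz h
      have hss : {b | r b y} ⊂ {b | r b x} :=
        (Set.ssubset_iff_of_subset hsub).2 ⟨y, h, fun hyy => aux_irrefl hr y hyy⟩
      have hlt := Set.ncard_lt_ncard hss (Set.toFinite _)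
      exact hytop (by simpa only [topSet, Set.mem_setOf_eq] using
        lt_of_lt_of_le hlt (le_of_eq hi.symm))

private lemma aux_ncard_le {r : X → X → Prop} {x : X} {s : Set X}
    (h : ∀ b ∈ s, ¬ r b x) : Set.ncard {b | r b x} ≤ Fintype.card X - s.ncard := by
  have hsub : {b | r b x} ⊆ sᶜ := fun b hb hbs => h b hbs hb
  have h2 := Set.ncard_le_ncard hsub (Set.toFinite _)
  rwa [Set.compl_eq_univ_diff, Set.ncard_diff (Set.subset_univ _), Set.ncard_univ,
    Nat.card_eq_fintype_card] at h2

private lemma aux_ncard_ge {r : X → X → Prop} {v w : X} (hvw : w ≠ v)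
    (h : ∀ b, b ≠ v → b ≠ w → r b w) : Fintype.card X - 2 ≤ Set.ncard {b | r b w} := by
  have hsub : ({v, w} : Set X)ᶜ ⊆ {b | r b w} := by
    intro b hb
    simp only [Set.mem_compl_iff, Set.mem_insert_iff, Set.mem_singleton_iff, not_or] at hb
    exact h b hb.1 hb.2
  have h2 := Set.ncard_le_ncard hsub (Set.toFinite _)
  rwa [Set.compl_eq_univ_diff, Set.ncard_diff (Set.subset_univ _), Set.ncard_univ,
    Nat.card_eq_fintype_card, Set.ncard_pair (Ne.symm hvw)] at h2

private lemma aux_three {v w y : X} (h1 : w ≠ v) (h2 : y ≠ v) (h3 : y ≠ w) :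
    3 ≤ Fintype.card X := by
  have hcard : ({v, w, y} : Finset X).card = 3 := by
    rw [Finset.card_insert_of_notMem (by simp [Ne.symm h1, Ne.symm h2]),
      Finset.card_insert_of_notMem (by simp [Ne.symm h3]), Finset.card_singleton]
  calc 3 = ({v, w, y} : Finset X).card := hcard.symm
    _ ≤ Fintype.card X := Finset.card_le_univ _

private lemma aux_min {r : X → X → Prop} (hr : IsSLO r) :
    ∀ s : Finset X, s.Nonempty → ∃ v ∈ s, ∀ b ∈ s, b ≠ v → r b v := by
  intro s
  induction s using Finset.induction_on with
  | empty => intro h; exact absurd rfl h.ne_empty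
  | @insert a s ha ih =>
    intro _
    rcases s.eq_empty_or_nonempty with rfl | hs
    · exact ⟨a, by simp, by intro b hb hba; simp at hb; exact absurd hb hba⟩
    · obtain ⟨v, hv, hmin⟩ := ih hs
      have hav : a ≠ v := fun h => ha (h ▸ hv)
      rcases hr.2.2 a v hav with h | h
      · refine ⟨v, Finset.mem_insert_of_mem hv, fun b hb hbv => ?_⟩
        rcases Finset.mem_insert.1 hb with rfl | hb
        · exact h
        · exact hmin b hb hbv
      · refine ⟨a, Finset.mem_insert_self a s, fun b hb hba => ?_⟩
        rcases Finset.mem_insert.1 hb with rfl | hb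
        · exact absurd rfl hba
        · by_cases hbv : b = v
          · exact hbv ▸ h
          · exact hr.2.1 b v a (hmin b hb hbv) h

private lemma aux_hard {c : Finset X → X} (hcard : 2 ≤ Fintype.card X)
    {r : X → X → Prop} (hr : IsSLO r)
    {I : Finset ℕ} (hI : RSP c r I) (hle : ∀ i ∈ I, i ≤ Fintype.card X - 2) :
    ∃ v w : X, w ≠ v ∧ ∀ A : Finset X, c A = v → w ∉ A := by
  haveI : Nonempty X := Fintype.card_pos_iff.1 (by omega)
  obtain ⟨v, -, hv⟩ := aux_min hr Finset.univ Finset.univ_nonempty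
  have herase : (Finset.univ.erase v).Nonempty := by
    rw [← Finset.card_pos, Finset.card_erase_of_mem (Finset.mem_univ v), Finset.card_univ]
    omega
  obtain ⟨w, hw, hwmin⟩ := aux_min hr (Finset.univ.erase v) herase
  have hwv : w ≠ v := (Finset.mem_erase.1 hw).1
  refine ⟨v, w, hwv, fun A hA hwA => ?_⟩
  obtain ⟨i, hiI, hmax⟩ := hI.2.2 A ⟨w, hwA⟩
  have hharm := hmax.2 w hwA (hA ▸ hwv)
  have hwtop : w ∉ topSet r i := by
    have h2 : Fintype.card X - 2 ≤ Set.ncard {b | r b w} :=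
      aux_ncard_ge hwv (fun b hbv hbw =>
        hwmin b (Finset.mem_erase.2 ⟨hbv, Finset.mem_univ b⟩) hbw)
    intro htop
    simp only [topSet, Set.mem_setOf_eq] at htop
    have := hle i hiI
    omega
  rcases hharm with ⟨h1, -⟩ | ⟨-, -, h3⟩
  · exact hwtop h1
  · rw [hA] at h3
    exact hr.1 w v (hv w (Finset.mem_univ w) hwv) h3

private lemma aux_build {c : Finset X → X} (hc : IsChoice c) (hcard : 2 ≤ Fintype.card X)
    {v w : X} (hwv : w ≠ v) (hP : ∀ A : Finset X, c A = v → w ∉ A) :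
    ∃ r : X → X → Prop, IsSLO r ∧ RSP c r (Finset.range (Fintype.card X - 1)) := by
  classical
  set n := Fintype.card X with hn
  let e := Fintype.equivFin X
  set key : X → ℕ := fun x => if x = v then n + 1 else if x = w then n else e x with hkey
  have hkey_lt : ∀ x : X, (e x : ℕ) < n := fun x => (e x).2
  have hkeyv : key v = n + 1 := by simp [hkey]
  have hkeyw : key w = n := by simp [hkey, hwv]
  have hkeyo : ∀ x : X, x ≠ v → x ≠ w → key x = e x := by
    intro x h1 h2; simp [hkey, h1, h2]
  have hcase : ∀ x : X, (x = v ∧ key x = n + 1) ∨ (x = w ∧ key x = n) ∨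
      (key x = (e x : ℕ) ∧ (e x : ℕ) < n) := by
    intro x
    by_cases h1 : x = v
    · exact Or.inl ⟨h1, by rw [h1, hkeyv]⟩
    by_cases h2 : x = w
    · exact Or.inr (Or.inl ⟨h2, by rw [h2, hkeyw]⟩)
    · exact Or.inr (Or.inr ⟨hkeyo x h1 h2, hkey_lt x⟩)
  have hkeyinj : ∀ a b : X, a ≠ b → key a ≠ key b := by
    intro a b hab h
    rcases hcase a with ⟨ha1, ha2⟩ | ⟨ha1, ha2⟩ | ⟨ha2, ha3⟩ <;>
      rcases hcase b with ⟨hb1, hb2⟩ | ⟨hb1, hb2⟩ | ⟨hb2, hb3⟩ <;>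
      first
        | exact hab (ha1.trans hb1.symm)
        | omega
        | (rw [ha2, hb2] at h; exact hab (e.injective (Fin.val_injective h)))
  set r : X → X → Prop := fun a b => key a < key b with hr'
  have hr : IsSLO r := by
    refine ⟨fun a b h => by simp only [hr'] at *; omega,
      fun a b d h1 h2 => by simp only [hr'] at *; omega,
      fun a b hab => ?_⟩
    rcases Nat.lt_or_ge (key a) (key b) with h | h
    · exact Or.inl h
    · exact Or.inr (lt_of_le_of_ne h (hkeyinj b a (Ne.symm hab)))
  have hkeyle : ∀ x : X, key x ≤ n + 1 := by
    intro x
    by_cases h1 : x = v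
    · rw [h1, hkeyv]
    · by_cases h2 : x = w
      · rw [h2, hkeyw]; omega
      · rw [hkeyo x h1 h2]; have := hkey_lt x; omega
  have hrbv : ∀ b : X, b ≠ v → r b v := by
    intro b hb
    have : key b ≤ n := by
      by_cases h2 : b = w
      · rw [h2, hkeyw]
      · rw [hkeyo b hb h2]; exact le_of_lt (hkey_lt b)
    simp only [hr', hkeyv]; omega
  have hnrv : ∀ b : X, ¬ r v b := by
    intro b h
    have := hkeyle b
    simp only [hr', hkeyv] at h
    omega
  have hnrw : ∀ b : X, b ≠ v → b ≠ w → ¬ r w b := by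
    intro b h1 h2 h
    simp only [hr', hkeyw, hkeyo b h1 h2] at h
    have := hkey_lt b
    omega
  refine ⟨r, hr, ⟨0, Finset.mem_range.2 (by omega)⟩, fun i hi => by
    rw [Finset.mem_range] at hi; omega, fun A hA => ?_⟩
  by_cases hAv : c A = v
  · have hwA : w ∉ A := hP A hAv
    refine ⟨n - 2, Finset.mem_range.2 (by omega), ?_⟩
    rw [show c A = v from hAv]
    refine ⟨hAv ▸ hc A hA, fun y hy hyv => ?_⟩
    have hyw : y ≠ w := fun h => hwA (h ▸ hy)
    have hytop : y ∈ topSet r (n - 2) := by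
      have h3 : 3 ≤ n := aux_three hwv hyv hyw
      have hle3 : Set.ncard {b | r b y} ≤ n - 3 := by
        have := aux_ncard_le (r := r) (x := y) (s := {v, w, y}) (by
          intro b hb
          simp only [Set.mem_insert_iff, Set.mem_singleton_iff] at hb
          rcases hb with rfl | rfl | hb
          · exact hnrv y
          · exact hnrw y hyv hyw
          · exact hb ▸ aux_irrefl hr y)
        rwa [show ({v, w, y} : Set X).ncard = 3 by
          rw [Set.ncard_insert_of_notMem (by simp [Ne.symm hwv, Ne.symm hyv]),
            Set.ncard_insert_of_notMem (by simp [Ne.symm hyw]), Set.ncard_singleton]] at this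
      simp only [topSet, Set.mem_setOf_eq]
      omega
    exact Or.inl ⟨hytop, fun _ => hrbv y hyv⟩
  · have hbound : Set.ncard {b | r b (c A)} ≤ n - 2 := by
      have := aux_ncard_le (r := r) (x := c A) (s := {v, c A}) (by
        intro b hb
        simp only [Set.mem_insert_iff, Set.mem_singleton_iff] at hb
        rcases hb with rfl | rfl
        · exact hnrv (c A)
        · exact aux_irrefl hr (c A))
      rwa [Set.ncard_pair (fun h => hAv h.symm)] at this
    exact ⟨Set.ncard {b | r b (c A)}, Finset.mem_range.2 (by omega), aux_maxof hr (hc A hA)⟩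

private lemma aux_top_mem {c : Finset X → X} (hc : IsChoice c) (hcard : 2 ≤ Fintype.card X) :
    ∃ r : X → X → Prop, IsSLO r ∧ RSP c r (Finset.range (Fintype.card X)) := by
  set n := Fintype.card X with hn
  let e := Fintype.equivFin X
  set r : X → X → Prop := fun a b => (e a : ℕ) < e b with hr'
  have hr : IsSLO r := by
    refine ⟨fun a b h => by simp only [hr'] at *; omega,
      fun a b d h1 h2 => by simp only [hr'] at *; omega,
      fun a b hab => ?_⟩
    simp only [hr']
    have : (e a : ℕ) ≠ (e b : ℕ) := fun h => hab (e.injective (Fin.val_injective h))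
    omega
  refine ⟨r, hr, ⟨0, Finset.mem_range.2 (by omega)⟩, fun i hi => by
    rw [Finset.mem_range] at hi; omega, fun A hA => ?_⟩
  have hbound : Set.ncard {b | r b (c A)} ≤ n - 1 := by
    have := aux_ncard_le (r := r) (x := c A) (s := {c A})
      (by intro b hb; rw [Set.mem_singleton_iff] at hb; exact hb ▸ aux_irrefl hr (c A))
    rwa [Set.ncard_singleton] at this
  exact ⟨Set.ncard {b | r b (c A)}, Finset.mem_range.2 (by omega), aux_maxof hr (hc A hA)⟩


private lemma aux_rev {c : Finset X → X} (hc : IsChoice c)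
    (hQ : ∀ w v : X, w ≠ v → ∃ A : Finset X, w ∈ A ∧ c A = v) :
    ∀ v w : X, v ≠ w → ∃ A B : Finset X, IsReversal c A B ∧ c A = v ∧ c B = w := by
  intro v w hvw
  obtain ⟨A, hwA, hcA⟩ := hQ w v (Ne.symm hvw)
  obtain ⟨B, hvB, hcB⟩ := hQ v w hvw
  have hAne : A.Nonempty := ⟨w, hwA⟩
  have hBne : B.Nonempty := ⟨v, hvB⟩
  have hvA : v ∈ A := hcA ▸ hc A hAne
  have hwB : w ∈ B := hcB ▸ hc B hBne
  have hne : c A ≠ c B := by rw [hcA, hcB]; exact hvw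
  refine ⟨A, B, ⟨hAne, hBne, fun h => hne (by rw [h]), hne, ?_, ?_⟩, hcA, hcB⟩
  · rw [hcA]; exact Finset.mem_inter.2 ⟨hvA, hvB⟩
  · rw [hcB]; exact Finset.mem_inter.2 ⟨hwA, hwB⟩

end AuxSP

theorem stmt16 [Fintype X] [DecidableEq X] (c : Finset X → X) (hc : IsChoice c)
    (hcard : 2 ≤ Fintype.card X) :
    sp c = Fintype.card X - 1 ↔ ViolatesCNS c (Fintype.card X - 1) := by
  classical
  set n := Fintype.card X with hn
  set S := { m : ℕ | ∃ r : X → X → Prop, IsSLO r ∧ ∃ I : Finset ℕ,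
    RSP c r I ∧ m ∈ I ∧ ∀ i ∈ I, i ≤ m } with hS
  have hsp : sp c = sInf S := rfl
  have htop : (n - 1) ∈ S := by
    obtain ⟨r, hr, hrsp⟩ := aux_top_mem hc hcard
    exact ⟨r, hr, Finset.range n, hrsp, Finset.mem_range.2 (by omega),
      fun i hi => by rw [Finset.mem_range] at hi; omega⟩
  constructor
  · intro hspn
    rw [hsp] at hspn
    have hQ : ∀ w v : X, w ≠ v → ∃ A : Finset X, w ∈ A ∧ c A = v := by
      intro w v hwv
      by_contra hcon
      push_neg at hcon
      have hP : ∀ A : Finset X, c A = v → w ∉ A := fun A hA hw => hcon A hw hA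
      obtain ⟨r, hr, hrsp⟩ := aux_build hc hcard hwv hP
      have hmem : (n - 2) ∈ S := ⟨r, hr, Finset.range (n - 1), hrsp,
        Finset.mem_range.2 (by omega), fun i hi => by rw [Finset.mem_range] at hi; omega⟩
      have := Nat.sInf_le hmem
      omega
    constructor
    · intro D hD
      have hcd : 2 ≤ (Finset.univ \ D).card := by
        rw [Finset.card_sdiff_of_subset (Finset.subset_univ D), Finset.card_univ]
        omega
      obtain ⟨a, ha, b, hb, hab⟩ := Finset.one_lt_card.1 (by omega : 1 < (Finset.univ \ D).card)
      obtain ⟨A, B, hrev, hca, hcb⟩ := aux_rev hc hQ a b hab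
      exact ⟨A, B, hrev, by rw [hca]; exact (Finset.mem_sdiff.1 ha).2,
        by rw [hcb]; exact (Finset.mem_sdiff.1 hb).2⟩
    · haveI : Nonempty X := Fintype.card_pos_iff.1 (by omega)
      obtain ⟨z⟩ := ‹Nonempty X›
      refine ⟨Finset.univ.erase z,
        by rw [Finset.card_erase_of_mem (Finset.mem_univ z), Finset.card_univ], ?_, ?_⟩
      · intro A B hrev
        by_contra hcon
        push_neg at hcon
        have h1 : c A = z := by
          have := hcon.1
          simpa [Finset.mem_erase] using this
        have h2 : c B = z := by
          have := hcon.2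
          simpa [Finset.mem_erase] using this
        exact hrev.2.2.2.1 (h1.trans h2.symm)
      · intro x hx
        have hxz : x ≠ z := (Finset.mem_erase.1 hx).1
        obtain ⟨A, B, hrev, hca, hcb⟩ := aux_rev hc hQ x z hxz
        exact ⟨A, B, z, hrev, by simp, Or.inl ⟨hca, hcb⟩⟩
  · intro hV
    rw [hsp]
    have hle : sInf S ≤ n - 1 := Nat.sInf_le htop
    by_contra hne
    have hlt : sInf S < n - 1 := lt_of_le_of_ne hle hne
    have hmem := Nat.sInf_mem (⟨_, htop⟩ : S.Nonempty)
    obtain ⟨r, hr, I, hrsp, hmI, hbound⟩ := hmem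
    have hle2 : ∀ i ∈ I, i ≤ n - 2 := fun i hi => by
      have := hbound i hi
      omega
    obtain ⟨v, w, hwv, hP⟩ := aux_hard hcard hr hrsp hle2
    have hcardD : (Finset.univ \ {v, w}).card < n - 1 := by
      rw [Finset.card_sdiff_of_subset (Finset.subset_univ _), Finset.card_univ,
        Finset.card_pair (Ne.symm hwv)]
      omega
    obtain ⟨A, B, hrev, hA, hB⟩ := hV.1 _ hcardD
    have hA' : c A = v ∨ c A = w := by
      have := hA
      simp only [Finset.mem_sdiff, Finset.mem_univ, true_and, Finset.mem_insert,
        Finset.mem_singleton, not_not] at this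
      tauto
    have hB' : c B = v ∨ c B = w := by
      have := hB
      simp only [Finset.mem_sdiff, Finset.mem_univ, true_and, Finset.mem_insert,
        Finset.mem_singleton, not_not] at this
      tauto
    rcases hA' with h1 | h1 <;> rcases hB' with h2 | h2
    · exact hrev.2.2.2.1 (h1.trans h2.symm)
    · exact hP A h1 (h2 ▸ (Finset.mem_inter.1 hrev.2.2.2.2.2).1)
    · exact hP B h2 (h1 ▸ (Finset.mem_inter.1 hrev.2.2.2.2.1).2)
    · exact hrev.2.2.2.1 (h1.trans h2.symm)
end

section
/- Let c be a choice function on a finite nonempty set X with |X| ≥ 2. Then c violates WARP under constant nonreciprocal selection of |X|−1 items if and only if c is inconsistent, i.e., for all distinct x, y ∈ X there is a reversal (A, B) of c with c(A) = x and c(B) = y. -/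
variable {X : Type*}

theorem stmt17 [Fintype X] [DecidableEq X] (c : Finset X → X) (hc : IsChoice c)
    (hcard : 2 ≤ Fintype.card X) :
    ViolatesCNS c (Fintype.card X - 1) ↔ Inconsistent c := by
  have swap : ∀ A B, IsReversal c A B → IsReversal c B A := by
    rintro A B ⟨h1, h2, h3, h4, h5, h6⟩
    refine ⟨h2, h1, h3.symm, h4.symm, ?_, ?_⟩ <;> rw [Finset.inter_comm] <;> assumption
  constructor
  · rintro ⟨h1, -⟩ x y hxy
    have hD : (Finset.univ \ {x, y} : Finset X).card < Fintype.card X - 1 := by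
      have h2 : ({x, y} : Finset X).card = 2 := by
        rw [Finset.card_insert_of_notMem (by simp [hxy]), Finset.card_singleton]
      rw [Finset.card_sdiff_of_subset (Finset.subset_univ _), Finset.card_univ, h2]
      omega
    obtain ⟨A, B, hrev, hA, hB⟩ := h1 _ hD
    have hA' : c A = x ∨ c A = y := by by_contra h; push_neg at h; simp [h.1, h.2] at hA
    have hB' : c B = x ∨ c B = y := by by_contra h; push_neg at h; simp [h.1, h.2] at hB
    have hne := hrev.2.2.2.1
    rcases hA' with hA' | hA'
    · refine ⟨A, B, hrev, hA', ?_⟩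
      rcases hB' with hB' | hB'
      · exact absurd (hA'.trans hB'.symm) hne
      · exact hB'
    · refine ⟨B, A, swap _ _ hrev, ?_, hA'⟩
      rcases hB' with hB' | hB'
      · exact hB'
      · exact absurd (hA'.trans hB'.symm) hne
  · intro hinc
    obtain ⟨z⟩ : Nonempty X := Fintype.card_pos_iff.mp (by omega)
    constructor
    · intro D hD
      have h2 : 1 < (Finset.univ \ D).card := by
        rw [Finset.card_sdiff_of_subset (Finset.subset_univ _), Finset.card_univ]
        have := Finset.card_le_univ D
        omega
      obtain ⟨x, hx, y, hy, hxy⟩ := Finset.one_lt_card.mp h2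
      obtain ⟨A, B, hrev, hcA, hcB⟩ := hinc x y hxy
      refine ⟨A, B, hrev, ?_, ?_⟩
      · rw [hcA]; simpa using hx
      · rw [hcB]; simpa using hy
    · refine ⟨Finset.univ.erase z, ?_, ?_, ?_⟩
      · rw [Finset.card_erase_of_mem (Finset.mem_univ z), Finset.card_univ]
      · intro A B hrev
        by_contra h
        push_neg at h
        obtain ⟨hA, hB⟩ := h
        simp only [Finset.mem_erase, Finset.mem_univ, and_true, not_not] at hA hB
        exact hrev.2.2.2.1 (hA.trans hB.symm)
      · intro x hx
        have hxz : x ≠ z := (Finset.mem_erase.mp hx).1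
        obtain ⟨A, B, hrev, hcA, hcB⟩ := hinc x z hxz
        exact ⟨A, B, z, hrev, Finset.notMem_erase z _, Or.inl ⟨hcA, hcB⟩⟩
end
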